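/- History-preserving bisimilarity and TLμ-equivalence are incomparable: there exist finite systems 𝔗₁, 𝔗₂ with 𝔗₁ ∼_hpb 𝔗₂ but 𝔗₁ ≁_{TLμ} 𝔗₂ (distinguished by the TLμ formula ⟨⊗⟩(⟨a⟩⟨c⟩tt ∧ ⟨b⟩⟨d⟩tt)), and there exist finite systems 𝔗₃, 𝔗₄ with 𝔗₃ ∼_{TLμ} 𝔗₄ but 𝔗₃ ≁_hpb 𝔗₄. Hence neither ∼_hpb ⊆ ∼_{TLμ} nor ∼_{TLμ} ⊆ ∼_hpb. -/

import Mathlib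

namespace TC

/-- A labelled transition: source state, label, target state. -/
structure Tr (S L : Type) where
  src : S
  lbl : L
  tgt : S

/-- A system (pre-TSI): initial state, set of transitions, independence relation. -/
structure Sys (S L : Type) where
  init : S
  T : Set (Tr S L)
  I : Tr S L → Tr S L → Prop

/-- Processes of the stateless maximal process space: a support set together
with a transition of `𝔄 = T ∪ {t_ε}` (`none` is the empty transition `t_ε`). -/
abbrev Proc (S L : Type) := Set (Tr S L) × Option (Tr S L)

namespace Sys

variable {S L : Type} (𝔗 : Sys S L)

/-- `≺` : two transitions are instances of the same action in two different interleavings. -/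
def Prec (t u : Tr S L) : Prop :=
  t.lbl = u.lbl ∧ ∃ b, 𝔗.I t ⟨t.src, b, u.src⟩ ∧ 𝔗.I t ⟨t.tgt, b, u.tgt⟩ ∧
    𝔗.I ⟨t.src, b, u.src⟩ u

/-- `∼` : the least equivalence relation containing `≺`. -/
def Sim : Tr S L → Tr S L → Prop := Relation.EqvGen 𝔗.Prec

/-- `t ⊗ t'` : immediately concurrent transitions. -/
def Conc (t t' : Tr S L) : Prop := t.src = t'.src ∧ 𝔗.I t t'

/-- `t # t'` : transitions in conflict. -/
def Confl (t t' : Tr S L) : Prop := t.src = t'.src ∧ ¬ 𝔗.I t t'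

/-- `t ⊖ t'` : linearly concurrent transitions. -/
def Lin (t t' : Tr S L) : Prop := t.tgt = t'.src ∧ 𝔗.I t t'

/-- `t ≤ t'` : causally dependent transitions. -/
def Caus (t t' : Tr S L) : Prop := t.tgt = t'.src ∧ ¬ 𝔗.I t t'

/-- `≤` lifted to `𝔄 = T ∪ {t_ε}`: the empty transition `t_ε` (i.e. `none`)
satisfies `t_ε ≤ r` for every transition `r` with source `s₀`. -/
def CausA : Option (Tr S L) → Tr S L → Prop
  | none, r => r.src = 𝔗.init
  | some t, r => 𝔗.Caus t r

/-- `⊖` lifted to `𝔄 = T ∪ {t_ε}`. -/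
def LinA : Option (Tr S L) → Tr S L → Prop
  | none, _ => False
  | some t, r => 𝔗.Lin t r

/-- `𝔛(s)` : the maximal set of transitions at state `s`. -/
def maxSet (s : S) : Set (Tr S L) := {t | t ∈ 𝔗.T ∧ t.src = s}

/-- A conflict-free set of transitions: all with the same source and pairwise
immediately concurrent. -/
def ConflictFree (P : Set (Tr S L)) : Prop :=
  P ⊆ 𝔗.T ∧ (∃ s, ∀ t ∈ P, Tr.src t = s) ∧
    ∀ t ∈ P, ∀ t' ∈ P, t ≠ t' → 𝔗.Conc t t'

/-- A support set: a maximal set or a non-empty conflict-free set. -/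
def IsSupport (R : Set (Tr S L)) : Prop :=
  (∃ s, R = 𝔗.maxSet s) ∨ (R.Nonempty ∧ 𝔗.ConflictFree R)

/-- `M ⊑ R` : `M` is a complete trace of `R`, i.e. a conflict-free support set
`M ⊆ R` that cannot be enlarged inside `R` by a transition concurrent with all of `M`. -/
def CompleteTrace (M R : Set (Tr S L)) : Prop :=
  𝔗.IsSupport M ∧ 𝔗.ConflictFree M ∧ M ⊆ R ∧
    ¬ ∃ t ∈ R \ M, ∀ t' ∈ M, 𝔗.Conc t t'

/-- `𝒳` : the set of maximal sets and maximal traces of `𝔗`. -/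
def calX : Set (Set (Tr S L)) :=
  {R | (∃ s, R = 𝔗.maxSet s) ∨ ∃ s, 𝔗.CompleteTrace R (𝔗.maxSet s)}

/-- Membership in `𝔄 = T ∪ {t_ε}`. -/
def memA : Option (Tr S L) → Prop
  | none => True
  | some t => t ∈ 𝔗.T

/-- The stateless maximal process space `𝔖 = 𝒳 × 𝔄`. -/
def Sspace : Set (Proc S L) := {p | p.1 ∈ 𝔗.calX ∧ 𝔗.memA p.2}

/-- The initial process `(𝔛(s₀), t_ε)`. -/
def initProc : Proc S L := (𝔗.maxSet 𝔗.init, none)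

/-- The axioms making a system a transition system with independence. -/
structure IsTSI : Prop where
  I_dom : ∀ ⦃t t'⦄, 𝔗.I t t' → t ∈ 𝔗.T ∧ t' ∈ 𝔗.T
  I_irrefl : ∀ t, ¬ 𝔗.I t t
  I_symm : ∀ ⦃t t'⦄, 𝔗.I t t' → 𝔗.I t' t
  A1 : ∀ ⦃t u⦄, 𝔗.Sim t u → t.src = u.src → t.lbl = u.lbl → t.tgt = u.tgt
  A2 : ∀ ⦃t u⦄, 𝔗.I t u → t.src = u.src →
        ∃ q, 𝔗.I t ⟨t.tgt, u.lbl, q⟩ ∧ 𝔗.I u ⟨u.tgt, t.lbl, q⟩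
  A3 : ∀ ⦃t u⦄, 𝔗.I t u → t.tgt = u.src →
        ∃ s₂, 𝔗.I t ⟨t.src, u.lbl, s₂⟩ ∧ 𝔗.I ⟨t.src, u.lbl, s₂⟩ ⟨s₂, t.lbl, u.tgt⟩
  A4 : ∀ ⦃t t₂⦄, 𝔗.Sim t t₂ → ∀ t', (𝔗.I t t' ↔ 𝔗.I t₂ t')

/-- Image-finiteness (finite branching). -/
def ImageFinite : Prop := ∀ s a, {t | t ∈ 𝔗.T ∧ t.src = s ∧ t.lbl = a}.Finite

/-- No auto-concurrency: independent transitions enabled at the same state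
never carry the same label. -/
def NoAutoConc : Prop :=
  ∀ ⦃t t'⦄, t ∈ 𝔗.T → t' ∈ 𝔗.T → 𝔗.Conc t t' → t.lbl ≠ t'.lbl

end Sys

end TC
namespace TC

namespace Sys

variable {S L : Type} (𝔗 : Sys S L)

/-- A sequence of composable transitions of `𝔗` from state `s`. -/
def IsRunFrom : S → List (Tr S L) → Prop
  | _, [] => True
  | s, t :: ts => t ∈ 𝔗.T ∧ t.src = s ∧ IsRunFrom t.tgt ts

/-- A run of `𝔗`: a finite sequence of composable transitions from `s₀`. -/
def IsRun (π : List (Tr S L)) : Prop := 𝔗.IsRunFrom 𝔗.init π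

/-- The state reached after executing a run (the target of `ϱ(π)`,
or `s₀` for the empty run). -/
def endState (π : List (Tr S L)) : S :=
  match π.getLast? with
  | none => 𝔗.init
  | some t => t.tgt

/-- The last transition of the run is independent of `u`
(false for the empty run). -/
def lastIndep (π : List (Tr S L)) (u : Tr S L) : Prop :=
  ∃ t, π.getLast? = some t ∧ 𝔗.I t u

/-- The causal dependency order on the event occurrences (positions) of a run,
induced by the independence relation: the reflexive-transitive closure of
"occurs earlier and is not independent". -/
def runOrder (π : List (Tr S L)) : Fin π.length → Fin π.length → Prop :=
  Relation.ReflTransGen (fun i j => i < j ∧ ¬ 𝔗.I (π.get i) (π.get j))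

end Sys

/-- The (labelled) posets induced by two runs with the respective independence
relations are isomorphic. -/
def PosetIso {S₁ S₂ L : Type} (𝔗₁ : Sys S₁ L) (𝔗₂ : Sys S₂ L)
    (π₁ : List (Tr S₁ L)) (π₂ : List (Tr S₂ L)) : Prop :=
  ∃ f : Fin π₁.length ≃ Fin π₂.length,
    (∀ i, (π₁.get i).lbl = (π₂.get (f i)).lbl) ∧
    ∀ i j, 𝔗₁.runOrder π₁ i j ↔ 𝔗₂.runOrder π₂ (f i) (f j)

/-- The pair of extended runs `(π₁·u, π₂·v)` is synchronous. -/
def SyncExt {S₁ S₂ L : Type} (𝔗₁ : Sys S₁ L) (𝔗₂ : Sys S₂ L)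
    (π₁ : List (Tr S₁ L)) (π₂ : List (Tr S₂ L)) (u : Tr S₁ L) (v : Tr S₂ L) : Prop :=
  (𝔗₁.lastIndep π₁ u ↔ 𝔗₂.lastIndep π₂ v) ∧
    PosetIso 𝔗₁ 𝔗₂ (π₁ ++ [u]) (π₂ ++ [v])

/-- A history-preserving (hp) bisimulation between `𝔗₁` and `𝔗₂`: a relation
on pairs of runs containing `(ε, ε)` such that any labelled extension of one
run is matched by an equally-labelled extension of the other keeping the pair
synchronous. -/
structure IsHPB {S₁ S₂ L : Type} (𝔗₁ : Sys S₁ L) (𝔗₂ : Sys S₂ L)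
    (R : List (Tr S₁ L) → List (Tr S₂ L) → Prop) : Prop where
  base : R [] []
  runs : ∀ ⦃π₁ π₂⦄, R π₁ π₂ → 𝔗₁.IsRun π₁ ∧ 𝔗₂.IsRun π₂
  fwd : ∀ ⦃π₁ π₂⦄, R π₁ π₂ → ∀ ⦃u⦄, u ∈ 𝔗₁.T → u.src = 𝔗₁.endState π₁ →
      ∃ v, v ∈ 𝔗₂.T ∧ v.src = 𝔗₂.endState π₂ ∧ v.lbl = u.lbl ∧
        SyncExt 𝔗₁ 𝔗₂ π₁ π₂ u v ∧ R (π₁ ++ [u]) (π₂ ++ [v])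
  bwd : ∀ ⦃π₁ π₂⦄, R π₁ π₂ → ∀ ⦃v⦄, v ∈ 𝔗₂.T → v.src = 𝔗₂.endState π₂ →
      ∃ u, u ∈ 𝔗₁.T ∧ u.src = 𝔗₁.endState π₁ ∧ u.lbl = v.lbl ∧
        SyncExt 𝔗₁ 𝔗₂ π₁ π₂ u v ∧ R (π₁ ++ [u]) (π₂ ++ [v])

/-- History-preserving bisimilarity `∼_hpb`. -/
def HPBisimilar {S₁ S₂ L : Type} (𝔗₁ : Sys S₁ L) (𝔗₂ : Sys S₂ L) : Prop :=
  ∃ R, IsHPB 𝔗₁ 𝔗₂ R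

/-- Locally synchronous pairs of runs: `(ε,ε)` is locally synchronous, and
`(π₀·u, π₁·v)` is locally synchronous iff `(π₀,π₁)` is and
`(ϱ(π₀),u) ∈ I₀ ⟺ (ϱ(π₁),v) ∈ I₁`. -/
inductive LocSync {S₁ S₂ L : Type} (𝔗₁ : Sys S₁ L) (𝔗₂ : Sys S₂ L) :
    List (Tr S₁ L) → List (Tr S₂ L) → Prop
  | nil : LocSync 𝔗₁ 𝔗₂ [] []
  | snoc {π₁ π₂ u v} : LocSync 𝔗₁ 𝔗₂ π₁ π₂ →
      (𝔗₁.lastIndep π₁ u ↔ 𝔗₂.lastIndep π₂ v) →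
      LocSync 𝔗₁ 𝔗₂ (π₁ ++ [u]) (π₂ ++ [v])

end TC
namespace TC

/-- Formulae of the trace modal mu-calculus `TLμ` (the fragment of TFL with
the combined modality `⟨a⟩ = ⟨a⟩_c ∨ ⟨a⟩_{nc}` and the `⟨⊗⟩` operator). -/
inductive TLmu (L : Type) where
  | tt : TLmu L
  | var : ℕ → TLmu L
  | neg : TLmu L → TLmu L
  | and : TLmu L → TLmu L → TLmu L
  | dia : L → TLmu L → TLmu L
  | diaOx : TLmu L → TLmu L
  | mu : ℕ → TLmu L → TLmu L

namespace TLmu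

variable {S L : Type}

/-- Denotation of `TLμ` formulae over the stateless maximal process space. -/
def denot (𝔗 : Sys S L) (V : ℕ → Set (Proc S L)) : TLmu L → Set (Proc S L)
  | .tt => 𝔗.Sspace
  | .var n => V n
  | .neg φ => 𝔗.Sspace \ denot 𝔗 V φ
  | .and φ ψ => denot 𝔗 V φ ∩ denot 𝔗 V ψ
  | .dia a φ => {p | p ∈ 𝔗.Sspace ∧ ∃ r ∈ p.1, r.lbl = a ∧
      (𝔗.CausA p.2 r ∨ 𝔗.LinA p.2 r) ∧ (𝔗.maxSet r.tgt, some r) ∈ denot 𝔗 V φ}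
  | .diaOx φ => {p | p ∈ 𝔗.Sspace ∧ ∃ M ∈ 𝔗.calX, 𝔗.CompleteTrace M p.1 ∧
      (M, p.2) ∈ denot 𝔗 V φ}
  | .mu n φ => ⋂₀ {Q | Q ⊆ 𝔗.Sspace ∧ denot 𝔗 (Function.update V n Q) φ ⊆ Q}

/-- Free variables of a `TLμ` formula. -/
def FV : TLmu L → Set ℕ
  | .tt => ∅
  | .var n => {n}
  | .neg φ => FV φ
  | .and φ ψ => FV φ ∪ FV ψ
  | .dia _ φ => FV φ
  | .diaOx φ => FV φ
  | .mu n φ => FV φ \ {n}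

/-- Fixpoint-free `TLμ` formulae. -/
def FpFree : TLmu L → Prop
  | .tt => True
  | .var _ => True
  | .neg φ => FpFree φ
  | .and φ ψ => FpFree φ ∧ FpFree ψ
  | .dia _ φ => FpFree φ
  | .diaOx φ => FpFree φ
  | .mu _ _ => False

end TLmu

/-- `TLμ`-equivalence: the initial processes satisfy the same fixpoint-free
closed `TLμ` formulae. -/
def TLmuEquiv {S₁ S₂ L : Type} (𝔗₁ : Sys S₁ L) (𝔗₂ : Sys S₂ L) : Prop :=
  ∀ φ : TLmu L, φ.FpFree → φ.FV = ∅ →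
    (𝔗₁.initProc ∈ TLmu.denot 𝔗₁ (fun _ => ∅) φ ↔
     𝔗₂.initProc ∈ TLmu.denot 𝔗₂ (fun _ => ∅) φ)

end TC


namespace TC

instance {S L : Type} [DecidableEq S] [DecidableEq L] : DecidableEq (Tr S L) := fun a b =>
  decidable_of_iff (a.src = b.src ∧ a.lbl = b.lbl ∧ a.tgt = b.tgt)
    (by cases a; cases b; simp [Tr.mk.injEq])


section Lists
variable {S L : Type} [DecidableEq S] [DecidableEq L]

/-- Build a TSI proof from finite list data. -/
theorem isTSI_of_lists (𝔗 : Sys S L) (LT : List (Tr S L))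
    (LI LE : List (Tr S L × Tr S L))
    (hT : ∀ t, t ∈ 𝔗.T ↔ t ∈ LT)
    (hI : ∀ t u, 𝔗.I t u ↔ (t, u) ∈ LI)
    (hdom : ∀ p ∈ LI, p.1 ∈ LT ∧ p.2 ∈ LT)
    (hirr : ∀ p ∈ LI, p.1 ≠ p.2)
    (hsym : ∀ p ∈ LI, (p.2, p.1) ∈ LI)
    (hEsym : ∀ p ∈ LE, (p.2, p.1) ∈ LE)
    (hEtrans : ∀ p ∈ LE, ∀ q ∈ LE, p.2 = q.1 → p.1 = q.2 ∨ (p.1, q.2) ∈ LE)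
    (hPrec : ∀ p ∈ LI, ∀ q ∈ LI, (q.1 = p.2 ∧ p.2.src = p.1.src ∧
      p.1.lbl = q.2.lbl ∧ p.2.tgt = q.2.src ∧
      (p.1, (⟨p.1.tgt, p.2.lbl, q.2.tgt⟩ : Tr S L)) ∈ LI) → p.1 = q.2 ∨ (p.1, q.2) ∈ LE)
    (hA1 : ∀ p ∈ LE, p.1.src = p.2.src → p.1.lbl = p.2.lbl → p.1.tgt = p.2.tgt)
    (hA4 : ∀ p ∈ LE, ∀ q ∈ LI, (q.1 = p.1 → (p.2, q.2) ∈ LI) ∧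
      (q.1 = p.2 → (p.1, q.2) ∈ LI))
    (hA2 : ∀ p ∈ LI, p.1.src = p.2.src → ∃ s,
      (p.1, (⟨p.1.tgt, p.2.lbl, s⟩ : Tr S L)) ∈ LI ∧
      (p.2, (⟨p.2.tgt, p.1.lbl, s⟩ : Tr S L)) ∈ LI)
    (hA3 : ∀ p ∈ LI, p.1.tgt = p.2.src → ∃ s,
      (p.1, (⟨p.1.src, p.2.lbl, s⟩ : Tr S L)) ∈ LI ∧
      ((⟨p.1.src, p.2.lbl, s⟩ : Tr S L), (⟨s, p.1.lbl, p.2.tgt⟩ : Tr S L)) ∈ LI) :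
    𝔗.IsTSI := by
  -- E is the candidate over-approximation of Sim
  set E : Tr S L → Tr S L → Prop := fun t u => t = u ∨ (t, u) ∈ LE with hE
  have precE : ∀ {t u}, 𝔗.Prec t u → E t u := by
    rintro t u ⟨hlbl, b, h1, h2, h3⟩
    rw [hI] at h1 h2 h3
    have := hPrec _ h1 _ h3 ⟨rfl, rfl, hlbl, rfl, h2⟩
    simpa [hE] using this
  have simE : ∀ {t u}, 𝔗.Sim t u → E t u := by
    intro t u h
    induction h with
    | rel _ _ h => exact precE h
    | refl _ => exact Or.inl rfl
    | symm _ _ _ ih =>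
        rcases ih with h | h
        · exact Or.inl h.symm
        · exact Or.inr (hEsym _ h)
    | trans _ _ _ _ _ ih1 ih2 =>
        rcases ih1 with h | h
        · rwa [h]
        · rcases ih2 with h' | h'
          · rw [← h']; exact Or.inr h
          · simpa using hEtrans _ h _ h' rfl
  refine ⟨?_, ?_, ?_, ?_, ?_, ?_, ?_⟩
  · intro t u h; rw [hI] at h
    have := hdom _ h
    exact ⟨(hT t).2 this.1, (hT u).2 this.2⟩
  · intro t h; rw [hI] at h; exact hirr _ h rfl
  · intro t u h; rw [hI] at h ⊢; exact hsym _ h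
  · intro t u hsim hs hl
    rcases simE hsim with h | h
    · rw [h]
    · exact hA1 _ h hs hl
  · intro t u h hs; rw [hI] at h
    obtain ⟨s, h1, h2⟩ := hA2 _ h hs
    exact ⟨s, (hI _ _).2 h1, (hI _ _).2 h2⟩
  · intro t u h ht; rw [hI] at h
    obtain ⟨s, h1, h2⟩ := hA3 _ h ht
    exact ⟨s, (hI _ _).2 h1, (hI _ _).2 h2⟩
  · intro t t₂ hsim t'
    rcases simE hsim with h | h
    · rw [h]
    · rw [hI, hI]
      constructor
      · intro hq; exact (hA4 _ h _ hq).1 rfl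
      · intro hq; exact (hA4 _ h _ hq).2 rfl

theorem noAutoConc_of_lists (𝔗 : Sys S L) (LI : List (Tr S L × Tr S L))
    (hI : ∀ t u, 𝔗.I t u ↔ (t, u) ∈ LI)
    (h : ∀ p ∈ LI, p.1.src = p.2.src → p.1.lbl ≠ p.2.lbl) :
    𝔗.NoAutoConc := by
  rintro t t' _ _ ⟨hs, hi⟩
  rw [hI] at hi
  exact h _ hi hs

/-- Set of a list. -/
def sl {α : Type} (l : List α) : Set α := {x | x ∈ l}

@[simp] theorem mem_sl {α : Type} {l : List α} {x : α} : x ∈ sl l ↔ x ∈ l := Iff.rfl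

theorem maxSet_eq_list (𝔗 : Sys S L) (LT : List (Tr S L))
    (hT : ∀ t, t ∈ 𝔗.T ↔ t ∈ LT) (s : S) (l : List (Tr S L))
    (h1 : ∀ t ∈ LT, t.src = s → t ∈ l)
    (h2 : ∀ t ∈ l, t ∈ LT ∧ t.src = s) :
    𝔗.maxSet s = sl l :=
  Set.ext fun t => ⟨fun ⟨ht, hs⟩ => h1 t ((hT t).1 ht) hs,
    fun h => ⟨(hT t).2 (h2 t h).1, (h2 t h).2⟩⟩

theorem conflictFree_list (𝔗 : Sys S L) (l : List (Tr S L)) (s : S)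
    (h1 : ∀ t ∈ l, t ∈ 𝔗.T) (h2 : ∀ t ∈ l, t.src = s)
    (h3 : ∀ t ∈ l, ∀ t' ∈ l, t ≠ t' → 𝔗.Conc t t') : 𝔗.ConflictFree (sl l) :=
  ⟨fun t ht => h1 t ht, ⟨s, h2⟩, h3⟩

theorem completeTrace_list (𝔗 : Sys S L) (lm lr : List (Tr S L))
    (hsupp : 𝔗.IsSupport (sl lm)) (hcf : 𝔗.ConflictFree (sl lm))
    (hsub : ∀ t ∈ lm, t ∈ lr)
    (hmax : ∀ t ∈ lr, t ∉ lm → ∃ t' ∈ lm, ¬ 𝔗.Conc t t') :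
    𝔗.CompleteTrace (sl lm) (sl lr) := by
  refine ⟨hsupp, hcf, fun t ht => hsub t ht, ?_⟩
  rintro ⟨t, ⟨htr, htm⟩, hall⟩
  obtain ⟨t', ht', hnc⟩ := hmax t htr htm
  exact hnc (hall t' ht')

theorem subset_nil {α : Type} {M : Set α} (h : M ⊆ sl ([] : List α)) :
    M = sl ([] : List α) := by
  ext x; simp only [mem_sl, List.not_mem_nil, iff_false]
  intro hx; simpa using h hx

theorem subset_single {α : Type} {M : Set α} {x : α} (h : M ⊆ sl [x]) :
    M = sl ([] : List α) ∨ M = sl [x] := by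
  by_cases hx : x ∈ M
  · right; ext y
    simp only [mem_sl, List.mem_singleton]
    exact ⟨fun hy => by simpa using h hy, fun hy => hy ▸ hx⟩
  · left; ext y
    simp only [mem_sl, List.not_mem_nil, iff_false]
    intro hy
    have := h hy; simp only [mem_sl, List.mem_singleton] at this
    exact hx (this ▸ hy)

theorem subset_pair {α : Type} {M : Set α} {x y : α} (h : M ⊆ sl [x, y]) :
    M = sl ([] : List α) ∨ M = sl [x] ∨ M = sl [y] ∨ M = sl [x, y] := by
  by_cases hx : x ∈ M <;> by_cases hy : y ∈ M
  · right; right; right; ext z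
    simp only [mem_sl, List.mem_cons, List.mem_singleton, List.not_mem_nil, or_false]
    refine ⟨fun hz => by simpa using h hz, ?_⟩
    rintro (rfl | rfl) <;> assumption
  · right; left; ext z
    simp only [mem_sl, List.mem_singleton]
    refine ⟨fun hz => ?_, fun hz => hz ▸ hx⟩
    have := h hz; simp only [mem_sl, List.mem_cons, List.mem_singleton, List.not_mem_nil, or_false] at this
    rcases this with rfl | rfl
    · rfl
    · exact absurd hz hy
  · right; right; left; ext z
    simp only [mem_sl, List.mem_singleton]
    refine ⟨fun hz => ?_, fun hz => hz ▸ hy⟩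
    have := h hz; simp only [mem_sl, List.mem_cons, List.mem_singleton, List.not_mem_nil, or_false] at this
    rcases this with rfl | rfl
    · exact absurd hz hx
    · rfl
  · left; ext z
    simp only [mem_sl, List.not_mem_nil, iff_false]
    intro hz
    have := h hz; simp only [mem_sl, List.mem_cons, List.mem_singleton, List.not_mem_nil, or_false] at this
    rcases this with rfl | rfl
    · exact hx hz
    · exact hy hz

theorem completeTrace_nil' {𝔗 : Sys S L} {M : Set (Tr S L)}
    (h : 𝔗.CompleteTrace M (sl ([] : List (Tr S L)))) : M = sl [] :=
  subset_nil h.2.2.1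

theorem completeTrace_single' {𝔗 : Sys S L} {M : Set (Tr S L)} {x : Tr S L}
    (h : 𝔗.CompleteTrace M (sl [x])) : M = sl [x] := by
  obtain ⟨-, -, hsub, hmax⟩ := h
  rcases subset_single hsub with rfl | rfl
  · exact absurd ⟨x, ⟨by simp, by simp⟩, fun t' ht' => absurd ht' (by simp)⟩ hmax
  · rfl

theorem completeTrace_pair_conc {𝔗 : Sys S L} {M : Set (Tr S L)} {x y : Tr S L}
    (hxy : x ≠ y) (hc1 : 𝔗.Conc y x) (hc2 : 𝔗.Conc x y)
    (h : 𝔗.CompleteTrace M (sl [x, y])) : M = sl [x, y] := by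
  obtain ⟨-, -, hsub, hmax⟩ := h
  rcases subset_pair hsub with rfl | rfl | rfl | rfl
  · exact absurd ⟨x, ⟨by simp, by simp⟩, fun t' ht' => absurd ht' (by simp)⟩ hmax
  · refine absurd ⟨y, ⟨by simp, ?_⟩, fun t' ht' => ?_⟩ hmax
    · simp only [mem_sl, List.mem_singleton]
      exact fun h => hxy h.symm
    · simp only [mem_sl, List.mem_singleton] at ht'
      exact ht' ▸ hc1
  · refine absurd ⟨x, ⟨by simp, ?_⟩, fun t' ht' => ?_⟩ hmax
    · simp only [mem_sl, List.mem_singleton]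
      exact hxy
    · simp only [mem_sl, List.mem_singleton] at ht'
      exact ht' ▸ hc2
  · rfl

theorem completeTrace_pair_confl {𝔗 : Sys S L} {M : Set (Tr S L)} {x y : Tr S L}
    (hxy : x ≠ y) (hnc : ¬ 𝔗.Conc x y)
    (h : 𝔗.CompleteTrace M (sl [x, y])) : M = sl [x] ∨ M = sl [y] := by
  obtain ⟨-, hcf, hsub, hmax⟩ := h
  rcases subset_pair hsub with rfl | rfl | rfl | rfl
  · exact absurd ⟨x, ⟨by simp, by simp⟩, fun t' ht' => absurd ht' (by simp)⟩ hmax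
  · exact Or.inl rfl
  · exact Or.inr rfl
  · exact absurd (hcf.2.2 x (by simp) y (by simp) hxy) hnc

theorem lastIndep_nil {S' L' : Type} (𝔗 : Sys S' L') (u : Tr S' L') :
    ¬ 𝔗.lastIndep [] u := by
  rintro ⟨t, ht, -⟩; simp at ht

theorem lastIndep_single {S' L' : Type} (𝔗 : Sys S' L') (x u : Tr S' L') :
    𝔗.lastIndep [x] u ↔ 𝔗.I x u := by
  simp [Sys.lastIndep]

theorem posetIso_of_length_eq {S₁ S₂ L' : Type} (𝔗₁ : Sys S₁ L') (𝔗₂ : Sys S₂ L')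
    (π₁ : List (Tr S₁ L')) (π₂ : List (Tr S₂ L')) (h : π₁.length = π₂.length)
    (hl : ∀ i : Fin π₁.length, (π₁.get i).lbl = (π₂.get (Fin.cast h i)).lbl)
    (hs : ∀ i j : Fin π₁.length,
      (i < j ∧ ¬ 𝔗₁.I (π₁.get i) (π₁.get j)) ↔
      (Fin.cast h i < Fin.cast h j ∧
        ¬ 𝔗₂.I (π₂.get (Fin.cast h i)) (π₂.get (Fin.cast h j)))) :
    PosetIso 𝔗₁ 𝔗₂ π₁ π₂ := by
  refine ⟨finCongr h, hl, fun i j => ?_⟩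
  constructor
  · intro hr
    induction hr with
    | refl => exact Relation.ReflTransGen.refl
    | tail _ hbc ih => exact ih.tail ((hs _ _).1 hbc)
  · intro hr
    have rev : ∀ i' j', Relation.ReflTransGen
        (fun i' j' => i' < j' ∧ ¬ 𝔗₂.I (π₂.get i') (π₂.get j')) i' j' →
        Relation.ReflTransGen
        (fun i j => i < j ∧ ¬ 𝔗₁.I (π₁.get i) (π₁.get j))
          (Fin.cast h.symm i') (Fin.cast h.symm j') := by
      intro i' j' hr'
      induction hr' with
      | refl => exact Relation.ReflTransGen.refl
      | tail _ hbc ih => exact ih.tail ((hs _ _).2 hbc)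
    exact rev _ _ hr

end Lists
end TC

namespace TC
namespace P2
set_option maxRecDepth 4000
-- Part 2 systems: a ∥ c diamond (𝔗₄) vs the same plus a causally-dependent extra c (𝔗₃).
-- labels: 0 = a, 1 = c.
def A0₄ : Tr (Fin 4) (Fin 2) := ⟨0, 0, 1⟩
def C0₄ : Tr (Fin 4) (Fin 2) := ⟨0, 1, 2⟩
def C1₄ : Tr (Fin 4) (Fin 2) := ⟨1, 1, 3⟩
def A1₄ : Tr (Fin 4) (Fin 2) := ⟨2, 0, 3⟩
def LT4 : List (Tr (Fin 4) (Fin 2)) := [A0₄, C0₄, C1₄, A1₄]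
def LI4 : List (Tr (Fin 4) (Fin 2) × Tr (Fin 4) (Fin 2)) :=
  [(A0₄, C0₄), (C0₄, A0₄), (A0₄, C1₄), (C1₄, A0₄),
   (C0₄, A1₄), (A1₄, C0₄), (A1₄, C1₄), (C1₄, A1₄)]
def LE4 : List (Tr (Fin 4) (Fin 2) × Tr (Fin 4) (Fin 2)) :=
  [(A0₄, A1₄), (A1₄, A0₄), (C0₄, C1₄), (C1₄, C0₄)]

def A0₃ : Tr (Fin 5) (Fin 2) := ⟨0, 0, 1⟩
def C0₃ : Tr (Fin 5) (Fin 2) := ⟨0, 1, 2⟩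
def C1₃ : Tr (Fin 5) (Fin 2) := ⟨1, 1, 3⟩
def A1₃ : Tr (Fin 5) (Fin 2) := ⟨2, 0, 3⟩
def Cd₃ : Tr (Fin 5) (Fin 2) := ⟨1, 1, 4⟩
def LT3 : List (Tr (Fin 5) (Fin 2)) := [A0₃, C0₃, C1₃, A1₃, Cd₃]
def LI3 : List (Tr (Fin 5) (Fin 2) × Tr (Fin 5) (Fin 2)) :=
  [(A0₃, C0₃), (C0₃, A0₃), (A0₃, C1₃), (C1₃, A0₃),
   (C0₃, A1₃), (A1₃, C0₃), (A1₃, C1₃), (C1₃, A1₃)]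
def LE3 : List (Tr (Fin 5) (Fin 2) × Tr (Fin 5) (Fin 2)) :=
  [(A0₃, A1₃), (A1₃, A0₃), (C0₃, C1₃), (C1₃, C0₃)]

def T3 : Sys (Fin 5) (Fin 2) := ⟨0, {t | t ∈ LT3}, fun t u => (t, u) ∈ LI3⟩
def T4 : Sys (Fin 4) (Fin 2) := ⟨0, {t | t ∈ LT4}, fun t u => (t, u) ∈ LI4⟩

instance (t u : Tr (Fin 5) (Fin 2)) : Decidable (T3.I t u) :=
  inferInstanceAs (Decidable ((t, u) ∈ LI3))
instance (t u : Tr (Fin 4) (Fin 2)) : Decidable (T4.I t u) :=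
  inferInstanceAs (Decidable ((t, u) ∈ LI4))
instance (t : Tr (Fin 5) (Fin 2)) : Decidable (t ∈ T3.T) :=
  inferInstanceAs (Decidable (t ∈ LT3))
instance (t : Tr (Fin 4) (Fin 2)) : Decidable (t ∈ T4.T) :=
  inferInstanceAs (Decidable (t ∈ LT4))

theorem T3_tsi : T3.IsTSI :=
  isTSI_of_lists T3 LT3 LI3 LE3 (fun _ => Iff.rfl) (fun _ _ => Iff.rfl)
    (by decide) (by decide) (by decide) (by decide) (by decide) (by decide)
    (by decide) (by decide) (by decide) (by decide)

theorem T4_tsi : T4.IsTSI :=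
  isTSI_of_lists T4 LT4 LI4 LE4 (fun _ => Iff.rfl) (fun _ _ => Iff.rfl)
    (by decide) (by decide) (by decide) (by decide) (by decide) (by decide)
    (by decide) (by decide) (by decide) (by decide)

theorem T3_nac : T3.NoAutoConc := noAutoConc_of_lists T3 LI3 (fun _ _ => Iff.rfl) (by decide)
theorem T4_nac : T4.NoAutoConc := noAutoConc_of_lists T4 LI4 (fun _ _ => Iff.rfl) (by decide)

theorem T34_not_hpb : ¬ HPBisimilar T3 T4 := by
  rintro ⟨R, hR⟩
  have hbase := hR.base
  obtain ⟨v, hvT, hvsrc, hvlbl, _, hRav⟩ :=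
    hR.fwd hbase (u := A0₃) (by exact List.mem_cons_self) rfl
  have hv : v = A0₄ := by
    have hvT' : v ∈ LT4 := hvT
    have hvsrc' : v.src = (0 : Fin 4) := hvsrc
    have hvlbl' : v.lbl = (0 : Fin 2) := hvlbl
    simp only [LT4, List.mem_cons, List.not_mem_nil, or_false] at hvT'
    rcases hvT' with h | h | h | h <;> subst h <;> first | rfl | (exfalso; revert hvsrc' hvlbl'; decide)
  subst hv
  obtain ⟨w, hwT, hwsrc, hwlbl, hsync, _⟩ :=
    hR.fwd hRav (u := Cd₃) (by exact (by decide : Cd₃ ∈ LT3)) rfl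
  have hw : w = C1₄ := by
    have hwT' : w ∈ LT4 := hwT
    have hwsrc' : w.src = (1 : Fin 4) := hwsrc
    have hwlbl' : w.lbl = (1 : Fin 2) := hwlbl
    simp only [LT4, List.mem_cons, List.not_mem_nil, or_false] at hwT'
    rcases hwT' with h | h | h | h <;> subst h <;> first | rfl | (exfalso; revert hwsrc' hwlbl'; decide)
  subst hw
  have h2 : Sys.lastIndep T4 ([] ++ [A0₄]) C1₄ := ⟨A0₄, rfl, by decide⟩
  have h1 := hsync.1.mpr h2
  obtain ⟨t, ht, hI⟩ := h1
  have : t = A0₃ := by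
    have : ([] ++ [A0₃]).getLast? = some A0₃ := rfl
    rw [this] at ht; exact (Option.some_injective _ ht.symm)
  subst this
  exact absurd hI (by decide)

instance (t u : Tr (Fin 5) (Fin 2)) : Decidable (T3.Conc t u) :=
  inferInstanceAs (Decidable (t.src = u.src ∧ (t, u) ∈ LI3))
instance (t u : Tr (Fin 4) (Fin 2)) : Decidable (T4.Conc t u) :=
  inferInstanceAs (Decidable (t.src = u.src ∧ (t, u) ∈ LI4))

-- maxSet computations
theorem m30 : T3.maxSet 0 = sl [A0₃, C0₃] :=
  maxSet_eq_list T3 LT3 (fun _ => Iff.rfl) 0 _ (by decide) (by decide)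
theorem m31 : T3.maxSet 1 = sl [C1₃, Cd₃] :=
  maxSet_eq_list T3 LT3 (fun _ => Iff.rfl) 1 _ (by decide) (by decide)
theorem m32 : T3.maxSet 2 = sl [A1₃] :=
  maxSet_eq_list T3 LT3 (fun _ => Iff.rfl) 2 _ (by decide) (by decide)
theorem m33 : T3.maxSet 3 = sl [] :=
  maxSet_eq_list T3 LT3 (fun _ => Iff.rfl) 3 _ (by decide) (by decide)
theorem m34 : T3.maxSet 4 = sl [] :=
  maxSet_eq_list T3 LT3 (fun _ => Iff.rfl) 4 _ (by decide) (by decide)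
theorem m40 : T4.maxSet 0 = sl [A0₄, C0₄] :=
  maxSet_eq_list T4 LT4 (fun _ => Iff.rfl) 0 _ (by decide) (by decide)
theorem m41 : T4.maxSet 1 = sl [C1₄] :=
  maxSet_eq_list T4 LT4 (fun _ => Iff.rfl) 1 _ (by decide) (by decide)
theorem m42 : T4.maxSet 2 = sl [A1₄] :=
  maxSet_eq_list T4 LT4 (fun _ => Iff.rfl) 2 _ (by decide) (by decide)
theorem m43 : T4.maxSet 3 = sl [] :=
  maxSet_eq_list T4 LT4 (fun _ => Iff.rfl) 3 _ (by decide) (by decide)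

-- complete traces (existence)
theorem ct30 : T3.CompleteTrace (sl [A0₃, C0₃]) (sl [A0₃, C0₃]) :=
  completeTrace_list T3 _ _ (Or.inl ⟨0, m30.symm⟩)
    (conflictFree_list T3 _ 0 (by decide) (by decide) (by decide)) (by decide) (by decide)
theorem ct31a : T3.CompleteTrace (sl [C1₃]) (sl [C1₃, Cd₃]) :=
  completeTrace_list T3 _ _ (Or.inr ⟨⟨C1₃, by simp⟩, conflictFree_list T3 _ 1 (by decide) (by decide) (by decide)⟩)
    (conflictFree_list T3 _ 1 (by decide) (by decide) (by decide)) (by decide) (by decide)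
theorem ct31b : T3.CompleteTrace (sl [Cd₃]) (sl [C1₃, Cd₃]) :=
  completeTrace_list T3 _ _ (Or.inr ⟨⟨Cd₃, by simp⟩, conflictFree_list T3 _ 1 (by decide) (by decide) (by decide)⟩)
    (conflictFree_list T3 _ 1 (by decide) (by decide) (by decide)) (by decide) (by decide)
theorem ctsC1₃ : T3.CompleteTrace (sl [C1₃]) (sl [C1₃]) :=
  completeTrace_list T3 _ _ (Or.inr ⟨⟨C1₃, by simp⟩, conflictFree_list T3 _ 1 (by decide) (by decide) (by decide)⟩)
    (conflictFree_list T3 _ 1 (by decide) (by decide) (by decide)) (by decide) (by decide)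
theorem ctsCd₃ : T3.CompleteTrace (sl [Cd₃]) (sl [Cd₃]) :=
  completeTrace_list T3 _ _ (Or.inr ⟨⟨Cd₃, by simp⟩, conflictFree_list T3 _ 1 (by decide) (by decide) (by decide)⟩)
    (conflictFree_list T3 _ 1 (by decide) (by decide) (by decide)) (by decide) (by decide)
theorem ctsA1₃ : T3.CompleteTrace (sl [A1₃]) (sl [A1₃]) :=
  completeTrace_list T3 _ _ (Or.inr ⟨⟨A1₃, by simp⟩, conflictFree_list T3 _ 2 (by decide) (by decide) (by decide)⟩)
    (conflictFree_list T3 _ 2 (by decide) (by decide) (by decide)) (by decide) (by decide)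
theorem ctnil3 : T3.CompleteTrace (sl []) (sl []) :=
  completeTrace_list T3 _ _ (Or.inl ⟨3, m33.symm⟩)
    (conflictFree_list T3 _ 0 (by decide) (by decide) (by decide)) (by decide) (by decide)
theorem ct40 : T4.CompleteTrace (sl [A0₄, C0₄]) (sl [A0₄, C0₄]) :=
  completeTrace_list T4 _ _ (Or.inl ⟨0, m40.symm⟩)
    (conflictFree_list T4 _ 0 (by decide) (by decide) (by decide)) (by decide) (by decide)
theorem ctsC1₄ : T4.CompleteTrace (sl [C1₄]) (sl [C1₄]) :=
  completeTrace_list T4 _ _ (Or.inl ⟨1, m41.symm⟩)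
    (conflictFree_list T4 _ 1 (by decide) (by decide) (by decide)) (by decide) (by decide)
theorem ctsA1₄ : T4.CompleteTrace (sl [A1₄]) (sl [A1₄]) :=
  completeTrace_list T4 _ _ (Or.inl ⟨2, m42.symm⟩)
    (conflictFree_list T4 _ 2 (by decide) (by decide) (by decide)) (by decide) (by decide)
theorem ctnil4 : T4.CompleteTrace (sl []) (sl []) :=
  completeTrace_list T4 _ _ (Or.inl ⟨3, m43.symm⟩)
    (conflictFree_list T4 _ 0 (by decide) (by decide) (by decide)) (by decide) (by decide)

-- calX memberships
theorem x30 : sl [A0₃, C0₃] ∈ T3.calX := Or.inl ⟨0, m30.symm⟩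
theorem x31 : sl [C1₃, Cd₃] ∈ T3.calX := Or.inl ⟨1, m31.symm⟩
theorem x31a : sl [C1₃] ∈ T3.calX := Or.inr ⟨1, m31 ▸ ct31a⟩
theorem x31b : sl [Cd₃] ∈ T3.calX := Or.inr ⟨1, m31 ▸ ct31b⟩
theorem x32 : sl [A1₃] ∈ T3.calX := Or.inl ⟨2, m32.symm⟩
theorem x33 : sl ([] : List (Tr (Fin 5) (Fin 2))) ∈ T3.calX := Or.inl ⟨3, m33.symm⟩
theorem x40 : sl [A0₄, C0₄] ∈ T4.calX := Or.inl ⟨0, m40.symm⟩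
theorem x41 : sl [C1₄] ∈ T4.calX := Or.inl ⟨1, m41.symm⟩
theorem x42 : sl [A1₄] ∈ T4.calX := Or.inl ⟨2, m42.symm⟩
theorem x43 : sl ([] : List (Tr (Fin 4) (Fin 2))) ∈ T4.calX := Or.inl ⟨3, m43.symm⟩

-- the bisimulation on processes
def p0 : Proc (Fin 5) (Fin 2) := (sl [A0₃, C0₃], none)
def p1 : Proc (Fin 5) (Fin 2) := (sl [C1₃, Cd₃], some A0₃)
def p1a : Proc (Fin 5) (Fin 2) := (sl [C1₃], some A0₃)
def p1b : Proc (Fin 5) (Fin 2) := (sl [Cd₃], some A0₃)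
def p2 : Proc (Fin 5) (Fin 2) := (sl [A1₃], some C0₃)
def pd1 : Proc (Fin 5) (Fin 2) := (sl [], some C1₃)
def pd2 : Proc (Fin 5) (Fin 2) := (sl [], some Cd₃)
def pd3 : Proc (Fin 5) (Fin 2) := (sl [], some A1₃)
def q0 : Proc (Fin 4) (Fin 2) := (sl [A0₄, C0₄], none)
def q1 : Proc (Fin 4) (Fin 2) := (sl [C1₄], some A0₄)
def q2 : Proc (Fin 4) (Fin 2) := (sl [A1₄], some C0₄)
def qd1 : Proc (Fin 4) (Fin 2) := (sl [], some C1₄)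
def qd2 : Proc (Fin 4) (Fin 2) := (sl [], some A1₄)

def B (p : Proc (Fin 5) (Fin 2)) (q : Proc (Fin 4) (Fin 2)) : Prop :=
  (p = p0 ∧ q = q0) ∨ (p = p1 ∧ q = q1) ∨ (p = p1a ∧ q = q1) ∨ (p = p1b ∧ q = q1) ∨
  (p = p2 ∧ q = q2) ∨ (p = pd1 ∧ q = qd1) ∨ (p = pd2 ∧ q = qd1) ∨ (p = pd3 ∧ q = qd2)

theorem B1 : B p0 q0 := Or.inl ⟨rfl, rfl⟩
theorem B2 : B p1 q1 := Or.inr (Or.inl ⟨rfl, rfl⟩)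
theorem B3 : B p1a q1 := Or.inr (Or.inr (Or.inl ⟨rfl, rfl⟩))
theorem B4 : B p1b q1 := Or.inr (Or.inr (Or.inr (Or.inl ⟨rfl, rfl⟩)))
theorem B5 : B p2 q2 := Or.inr (Or.inr (Or.inr (Or.inr (Or.inl ⟨rfl, rfl⟩))))
theorem B6 : B pd1 qd1 := Or.inr (Or.inr (Or.inr (Or.inr (Or.inr (Or.inl ⟨rfl, rfl⟩)))))
theorem B7 : B pd2 qd1 := Or.inr (Or.inr (Or.inr (Or.inr (Or.inr (Or.inr (Or.inl ⟨rfl, rfl⟩))))))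
theorem B8 : B pd3 qd2 := Or.inr (Or.inr (Or.inr (Or.inr (Or.inr (Or.inr (Or.inr ⟨rfl, rfl⟩))))))

theorem B_mem3 {p q} (h : B p q) : p ∈ T3.Sspace := by
  rcases h with ⟨rfl, -⟩ | ⟨rfl, -⟩ | ⟨rfl, -⟩ | ⟨rfl, -⟩ | ⟨rfl, -⟩ | ⟨rfl, -⟩ | ⟨rfl, -⟩ | ⟨rfl, -⟩
  · exact ⟨x30, trivial⟩
  · exact ⟨x31, show A0₃ ∈ LT3 by decide⟩
  · exact ⟨x31a, show A0₃ ∈ LT3 by decide⟩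
  · exact ⟨x31b, show A0₃ ∈ LT3 by decide⟩
  · exact ⟨x32, show C0₃ ∈ LT3 by decide⟩
  · exact ⟨x33, show C1₃ ∈ LT3 by decide⟩
  · exact ⟨x33, show Cd₃ ∈ LT3 by decide⟩
  · exact ⟨x33, show A1₃ ∈ LT3 by decide⟩

theorem B_mem4 {p q} (h : B p q) : q ∈ T4.Sspace := by
  rcases h with ⟨-, rfl⟩ | ⟨-, rfl⟩ | ⟨-, rfl⟩ | ⟨-, rfl⟩ | ⟨-, rfl⟩ | ⟨-, rfl⟩ | ⟨-, rfl⟩ | ⟨-, rfl⟩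
  · exact ⟨x40, trivial⟩
  · exact ⟨x41, show A0₄ ∈ LT4 by decide⟩
  · exact ⟨x41, show A0₄ ∈ LT4 by decide⟩
  · exact ⟨x41, show A0₄ ∈ LT4 by decide⟩
  · exact ⟨x42, show C0₄ ∈ LT4 by decide⟩
  · exact ⟨x43, show C1₄ ∈ LT4 by decide⟩
  · exact ⟨x43, show C1₄ ∈ LT4 by decide⟩
  · exact ⟨x43, show A1₄ ∈ LT4 by decide⟩

theorem key : ∀ φ : TLmu (Fin 2), φ.FpFree → φ.FV = ∅ →
    ∀ p q, B p q →
      (p ∈ TLmu.denot T3 (fun _ => ∅) φ ↔ q ∈ TLmu.denot T4 (fun _ => ∅) φ) := by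
  intro φ
  induction φ with
  | tt =>
      intro _ _ p q hB
      simp only [TLmu.denot]
      exact iff_of_true (B_mem3 hB) (B_mem4 hB)
  | var n => intro _ hfv; exact absurd hfv (Set.singleton_ne_empty n)
  | neg φ ih =>
      intro hfp hfv p q hB
      have h := ih hfp hfv p q hB
      simp only [TLmu.denot, Set.mem_diff]
      constructor
      · rintro ⟨-, hnd⟩; exact ⟨B_mem4 hB, fun hq => hnd (h.mpr hq)⟩
      · rintro ⟨-, hnd⟩; exact ⟨B_mem3 hB, fun hp => hnd (h.mp hp)⟩
  | and φ ψ ihφ ihψ =>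
      intro hfp hfv p q hB
      obtain ⟨h1, h2⟩ := hfp
      have hfv' := Set.union_empty_iff.mp hfv
      have e1 := ihφ h1 hfv'.1 p q hB
      have e2 := ihψ h2 hfv'.2 p q hB
      simp only [TLmu.denot, Set.mem_inter_iff]
      exact and_congr e1 e2
  | mu n φ ih => intro hfp; exact False.elim hfp
  | dia a φ ih =>
      intro hfp hfv p q hB
      simp only [TLmu.denot, Set.mem_setOf_eq]
      rcases hB with ⟨rfl, rfl⟩ | ⟨rfl, rfl⟩ | ⟨rfl, rfl⟩ | ⟨rfl, rfl⟩ | ⟨rfl, rfl⟩ |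
        ⟨rfl, rfl⟩ | ⟨rfl, rfl⟩ | ⟨rfl, rfl⟩
      · -- p0 / q0
        constructor
        · rintro ⟨-, r, hr, hlbl, -, hden⟩
          have hr' : r ∈ [A0₃, C0₃] := hr
          simp only [List.mem_cons, List.mem_singleton, List.not_mem_nil, or_false] at hr'
          rcases hr' with rfl | rfl
          · rw [show T3.maxSet A0₃.tgt = sl [C1₃, Cd₃] from m31] at hden
            have hq := (ih hfp hfv p1 q1 B2).mp hden
            refine ⟨B_mem4 B1, A0₄, (by decide : A0₄ ∈ [A0₄, C0₄]), hlbl, Or.inl rfl, ?_⟩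
            rw [show T4.maxSet A0₄.tgt = sl [C1₄] from m41]
            exact hq
          · rw [show T3.maxSet C0₃.tgt = sl [A1₃] from m32] at hden
            have hq := (ih hfp hfv p2 q2 B5).mp hden
            refine ⟨B_mem4 B1, C0₄, (by decide : C0₄ ∈ [A0₄, C0₄]), hlbl, Or.inl rfl, ?_⟩
            rw [show T4.maxSet C0₄.tgt = sl [A1₄] from m42]
            exact hq
        · rintro ⟨-, r, hr, hlbl, -, hden⟩
          have hr' : r ∈ [A0₄, C0₄] := hr
          simp only [List.mem_cons, List.mem_singleton, List.not_mem_nil, or_false] at hr'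
          rcases hr' with rfl | rfl
          · rw [show T4.maxSet A0₄.tgt = sl [C1₄] from m41] at hden
            have hp := (ih hfp hfv p1 q1 B2).mpr hden
            refine ⟨B_mem3 B1, A0₃, (by decide : A0₃ ∈ [A0₃, C0₃]), hlbl, Or.inl rfl, ?_⟩
            rw [show T3.maxSet A0₃.tgt = sl [C1₃, Cd₃] from m31]
            exact hp
          · rw [show T4.maxSet C0₄.tgt = sl [A1₄] from m42] at hden
            have hp := (ih hfp hfv p2 q2 B5).mpr hden
            refine ⟨B_mem3 B1, C0₃, (by decide : C0₃ ∈ [A0₃, C0₃]), hlbl, Or.inl rfl, ?_⟩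
            rw [show T3.maxSet C0₃.tgt = sl [A1₃] from m32]
            exact hp
      · -- p1 / q1
        constructor
        · rintro ⟨-, r, hr, hlbl, -, hden⟩
          have hr' : r ∈ [C1₃, Cd₃] := hr
          simp only [List.mem_cons, List.mem_singleton, List.not_mem_nil, or_false] at hr'
          rcases hr' with rfl | rfl
          · rw [show T3.maxSet C1₃.tgt = sl [] from m33] at hden
            have hq := (ih hfp hfv pd1 qd1 B6).mp hden
            refine ⟨B_mem4 B2, C1₄, (by decide : C1₄ ∈ [C1₄]), hlbl,
              Or.inr ⟨rfl, by decide⟩, ?_⟩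
            rw [show T4.maxSet C1₄.tgt = sl [] from m43]
            exact hq
          · rw [show T3.maxSet Cd₃.tgt = sl [] from m34] at hden
            have hq := (ih hfp hfv pd2 qd1 B7).mp hden
            refine ⟨B_mem4 B2, C1₄, (by decide : C1₄ ∈ [C1₄]), hlbl,
              Or.inr ⟨rfl, by decide⟩, ?_⟩
            rw [show T4.maxSet C1₄.tgt = sl [] from m43]
            exact hq
        · rintro ⟨-, r, hr, hlbl, -, hden⟩
          have hr' : r ∈ [C1₄] := hr
          simp only [List.mem_singleton] at hr'
          subst hr'
          rw [show T4.maxSet C1₄.tgt = sl [] from m43] at hden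
          have hp := (ih hfp hfv pd1 qd1 B6).mpr hden
          refine ⟨B_mem3 B2, C1₃, (by decide : C1₃ ∈ [C1₃, Cd₃]), hlbl,
            Or.inr ⟨rfl, by decide⟩, ?_⟩
          rw [show T3.maxSet C1₃.tgt = sl [] from m33]
          exact hp
      · -- p1a / q1
        constructor
        · rintro ⟨-, r, hr, hlbl, -, hden⟩
          have hr' : r ∈ [C1₃] := hr
          simp only [List.mem_singleton] at hr'
          subst hr'
          rw [show T3.maxSet C1₃.tgt = sl [] from m33] at hden
          have hq := (ih hfp hfv pd1 qd1 B6).mp hden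
          refine ⟨B_mem4 B3, C1₄, (by decide : C1₄ ∈ [C1₄]), hlbl,
            Or.inr ⟨rfl, by decide⟩, ?_⟩
          rw [show T4.maxSet C1₄.tgt = sl [] from m43]
          exact hq
        · rintro ⟨-, r, hr, hlbl, -, hden⟩
          have hr' : r ∈ [C1₄] := hr
          simp only [List.mem_singleton] at hr'
          subst hr'
          rw [show T4.maxSet C1₄.tgt = sl [] from m43] at hden
          have hp := (ih hfp hfv pd1 qd1 B6).mpr hden
          refine ⟨B_mem3 B3, C1₃, (by decide : C1₃ ∈ [C1₃]), hlbl,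
            Or.inr ⟨rfl, by decide⟩, ?_⟩
          rw [show T3.maxSet C1₃.tgt = sl [] from m33]
          exact hp
      · -- p1b / q1
        constructor
        · rintro ⟨-, r, hr, hlbl, -, hden⟩
          have hr' : r ∈ [Cd₃] := hr
          simp only [List.mem_singleton] at hr'
          subst hr'
          rw [show T3.maxSet Cd₃.tgt = sl [] from m34] at hden
          have hq := (ih hfp hfv pd2 qd1 B7).mp hden
          refine ⟨B_mem4 B4, C1₄, (by decide : C1₄ ∈ [C1₄]), hlbl,
            Or.inr ⟨rfl, by decide⟩, ?_⟩
          rw [show T4.maxSet C1₄.tgt = sl [] from m43]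
          exact hq
        · rintro ⟨-, r, hr, hlbl, -, hden⟩
          have hr' : r ∈ [C1₄] := hr
          simp only [List.mem_singleton] at hr'
          subst hr'
          rw [show T4.maxSet C1₄.tgt = sl [] from m43] at hden
          have hp := (ih hfp hfv pd2 qd1 B7).mpr hden
          refine ⟨B_mem3 B4, Cd₃, (by decide : Cd₃ ∈ [Cd₃]), hlbl,
            Or.inl ⟨rfl, by decide⟩, ?_⟩
          rw [show T3.maxSet Cd₃.tgt = sl [] from m34]
          exact hp
      · -- p2 / q2
        constructor
        · rintro ⟨-, r, hr, hlbl, -, hden⟩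
          have hr' : r ∈ [A1₃] := hr
          simp only [List.mem_singleton] at hr'
          subst hr'
          rw [show T3.maxSet A1₃.tgt = sl [] from m33] at hden
          have hq := (ih hfp hfv pd3 qd2 B8).mp hden
          refine ⟨B_mem4 B5, A1₄, (by decide : A1₄ ∈ [A1₄]), hlbl,
            Or.inr ⟨rfl, by decide⟩, ?_⟩
          rw [show T4.maxSet A1₄.tgt = sl [] from m43]
          exact hq
        · rintro ⟨-, r, hr, hlbl, -, hden⟩
          have hr' : r ∈ [A1₄] := hr
          simp only [List.mem_singleton] at hr'
          subst hr'
          rw [show T4.maxSet A1₄.tgt = sl [] from m43] at hden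
          have hp := (ih hfp hfv pd3 qd2 B8).mpr hden
          refine ⟨B_mem3 B5, A1₃, (by decide : A1₃ ∈ [A1₃]), hlbl,
            Or.inr ⟨rfl, by decide⟩, ?_⟩
          rw [show T3.maxSet A1₃.tgt = sl [] from m33]
          exact hp
      · -- pd1 / qd1
        constructor
        · rintro ⟨-, r, hr, -, -, -⟩
          exact absurd (show r ∈ ([] : List (Tr (Fin 5) (Fin 2))) from hr) (by simp)
        · rintro ⟨-, r, hr, -, -, -⟩
          exact absurd (show r ∈ ([] : List (Tr (Fin 4) (Fin 2))) from hr) (by simp)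
      · -- pd2 / qd1
        constructor
        · rintro ⟨-, r, hr, -, -, -⟩
          exact absurd (show r ∈ ([] : List (Tr (Fin 5) (Fin 2))) from hr) (by simp)
        · rintro ⟨-, r, hr, -, -, -⟩
          exact absurd (show r ∈ ([] : List (Tr (Fin 4) (Fin 2))) from hr) (by simp)
      · -- pd3 / qd2
        constructor
        · rintro ⟨-, r, hr, -, -, -⟩
          exact absurd (show r ∈ ([] : List (Tr (Fin 5) (Fin 2))) from hr) (by simp)
        · rintro ⟨-, r, hr, -, -, -⟩
          exact absurd (show r ∈ ([] : List (Tr (Fin 4) (Fin 2))) from hr) (by simp)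
  | diaOx φ ih =>
      intro hfp hfv p q hB
      simp only [TLmu.denot, Set.mem_setOf_eq]
      rcases hB with ⟨rfl, rfl⟩ | ⟨rfl, rfl⟩ | ⟨rfl, rfl⟩ | ⟨rfl, rfl⟩ | ⟨rfl, rfl⟩ |
        ⟨rfl, rfl⟩ | ⟨rfl, rfl⟩ | ⟨rfl, rfl⟩
      · -- p0 / q0
        constructor
        · rintro ⟨-, M, -, hct, hden⟩
          have hM := completeTrace_pair_conc (by decide) (by decide) (by decide)
            (show T3.CompleteTrace M (sl [A0₃, C0₃]) from hct)
          subst hM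
          exact ⟨B_mem4 B1, sl [A0₄, C0₄], x40, ct40, (ih hfp hfv p0 q0 B1).mp hden⟩
        · rintro ⟨-, M, -, hct, hden⟩
          have hM := completeTrace_pair_conc (by decide) (by decide) (by decide)
            (show T4.CompleteTrace M (sl [A0₄, C0₄]) from hct)
          subst hM
          exact ⟨B_mem3 B1, sl [A0₃, C0₃], x30, ct30, (ih hfp hfv p0 q0 B1).mpr hden⟩
      · -- p1 / q1
        constructor
        · rintro ⟨-, M, -, hct, hden⟩
          have hM := completeTrace_pair_confl (by decide) (by decide)
            (show T3.CompleteTrace M (sl [C1₃, Cd₃]) from hct)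
          rcases hM with rfl | rfl
          · exact ⟨B_mem4 B2, sl [C1₄], x41, ctsC1₄, (ih hfp hfv p1a q1 B3).mp hden⟩
          · exact ⟨B_mem4 B2, sl [C1₄], x41, ctsC1₄, (ih hfp hfv p1b q1 B4).mp hden⟩
        · rintro ⟨-, M, -, hct, hden⟩
          have hM := completeTrace_single' (show T4.CompleteTrace M (sl [C1₄]) from hct)
          subst hM
          exact ⟨B_mem3 B2, sl [C1₃], x31a, ct31a, (ih hfp hfv p1a q1 B3).mpr hden⟩
      · -- p1a / q1
        constructor
        · rintro ⟨-, M, -, hct, hden⟩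
          have hM := completeTrace_single' (show T3.CompleteTrace M (sl [C1₃]) from hct)
          subst hM
          exact ⟨B_mem4 B3, sl [C1₄], x41, ctsC1₄, (ih hfp hfv p1a q1 B3).mp hden⟩
        · rintro ⟨-, M, -, hct, hden⟩
          have hM := completeTrace_single' (show T4.CompleteTrace M (sl [C1₄]) from hct)
          subst hM
          exact ⟨B_mem3 B3, sl [C1₃], x31a, ctsC1₃, (ih hfp hfv p1a q1 B3).mpr hden⟩
      · -- p1b / q1
        constructor
        · rintro ⟨-, M, -, hct, hden⟩
          have hM := completeTrace_single' (show T3.CompleteTrace M (sl [Cd₃]) from hct)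
          subst hM
          exact ⟨B_mem4 B4, sl [C1₄], x41, ctsC1₄, (ih hfp hfv p1b q1 B4).mp hden⟩
        · rintro ⟨-, M, -, hct, hden⟩
          have hM := completeTrace_single' (show T4.CompleteTrace M (sl [C1₄]) from hct)
          subst hM
          exact ⟨B_mem3 B4, sl [Cd₃], x31b, ctsCd₃, (ih hfp hfv p1b q1 B4).mpr hden⟩
      · -- p2 / q2
        constructor
        · rintro ⟨-, M, -, hct, hden⟩
          have hM := completeTrace_single' (show T3.CompleteTrace M (sl [A1₃]) from hct)
          subst hM
          exact ⟨B_mem4 B5, sl [A1₄], x42, ctsA1₄, (ih hfp hfv p2 q2 B5).mp hden⟩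
        · rintro ⟨-, M, -, hct, hden⟩
          have hM := completeTrace_single' (show T4.CompleteTrace M (sl [A1₄]) from hct)
          subst hM
          exact ⟨B_mem3 B5, sl [A1₃], x32, ctsA1₃, (ih hfp hfv p2 q2 B5).mpr hden⟩
      · -- pd1 / qd1
        constructor
        · rintro ⟨-, M, -, hct, hden⟩
          have hM := completeTrace_nil' (show T3.CompleteTrace M (sl []) from hct)
          subst hM
          exact ⟨B_mem4 B6, sl [], x43, ctnil4, (ih hfp hfv pd1 qd1 B6).mp hden⟩
        · rintro ⟨-, M, -, hct, hden⟩
          have hM := completeTrace_nil' (show T4.CompleteTrace M (sl []) from hct)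
          subst hM
          exact ⟨B_mem3 B6, sl [], x33, ctnil3, (ih hfp hfv pd1 qd1 B6).mpr hden⟩
      · -- pd2 / qd1
        constructor
        · rintro ⟨-, M, -, hct, hden⟩
          have hM := completeTrace_nil' (show T3.CompleteTrace M (sl []) from hct)
          subst hM
          exact ⟨B_mem4 B7, sl [], x43, ctnil4, (ih hfp hfv pd2 qd1 B7).mp hden⟩
        · rintro ⟨-, M, -, hct, hden⟩
          have hM := completeTrace_nil' (show T4.CompleteTrace M (sl []) from hct)
          subst hM
          exact ⟨B_mem3 B7, sl [], x33, ctnil3, (ih hfp hfv pd2 qd1 B7).mpr hden⟩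
      · -- pd3 / qd2
        constructor
        · rintro ⟨-, M, -, hct, hden⟩
          have hM := completeTrace_nil' (show T3.CompleteTrace M (sl []) from hct)
          subst hM
          exact ⟨B_mem4 B8, sl [], x43, ctnil4, (ih hfp hfv pd3 qd2 B8).mp hden⟩
        · rintro ⟨-, M, -, hct, hden⟩
          have hM := completeTrace_nil' (show T4.CompleteTrace M (sl []) from hct)
          subst hM
          exact ⟨B_mem3 B8, sl [], x33, ctnil3, (ih hfp hfv pd3 qd2 B8).mpr hden⟩

theorem T34_tlmu : TLmuEquiv T3 T4 := by
  intro φ hfp hfv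
  have h := key φ hfp hfv p0 q0 B1
  have e3 : T3.initProc = p0 :=
    congrArg (fun X => (X, (none : Option (Tr (Fin 5) (Fin 2))))) m30
  have e4 : T4.initProc = q0 :=
    congrArg (fun X => (X, (none : Option (Tr (Fin 4) (Fin 2))))) m40
  rw [e3, e4]
  exact h

end P2
end TC

namespace TC
namespace P1
set_option maxRecDepth 8000
-- Part 1 systems over states Fin 9, labels Fin 4 (0=a, 1=b, 2=c, 3=d).
def a1 : Tr (Fin 9) (Fin 4) := ⟨0, 0, 1⟩
def a2 : Tr (Fin 9) (Fin 4) := ⟨0, 0, 2⟩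
def b1 : Tr (Fin 9) (Fin 4) := ⟨0, 1, 3⟩
def b2 : Tr (Fin 9) (Fin 4) := ⟨0, 1, 4⟩
def bq1 : Tr (Fin 9) (Fin 4) := ⟨1, 1, 5⟩
def aq1 : Tr (Fin 9) (Fin 4) := ⟨3, 0, 5⟩
def bq2 : Tr (Fin 9) (Fin 4) := ⟨2, 1, 6⟩
def aq2 : Tr (Fin 9) (Fin 4) := ⟨4, 0, 6⟩
def c1 : Tr (Fin 9) (Fin 4) := ⟨1, 2, 7⟩
def d1 : Tr (Fin 9) (Fin 4) := ⟨3, 3, 8⟩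
def A1 : Tr (Fin 9) (Fin 4) := ⟨0, 0, 1⟩
def A2 : Tr (Fin 9) (Fin 4) := ⟨0, 0, 2⟩
def B1 : Tr (Fin 9) (Fin 4) := ⟨0, 1, 3⟩
def B2 : Tr (Fin 9) (Fin 4) := ⟨0, 1, 4⟩
def bp : Tr (Fin 9) (Fin 4) := ⟨1, 1, 5⟩
def ap : Tr (Fin 9) (Fin 4) := ⟨4, 0, 5⟩
def bpp : Tr (Fin 9) (Fin 4) := ⟨2, 1, 6⟩
def app : Tr (Fin 9) (Fin 4) := ⟨3, 0, 6⟩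
def c2 : Tr (Fin 9) (Fin 4) := ⟨1, 2, 7⟩
def d2 : Tr (Fin 9) (Fin 4) := ⟨3, 3, 8⟩
def LT1 : List (Tr (Fin 9) (Fin 4)) := [a1, a2, b1, b2, bq1, aq1, bq2, aq2, c1, d1]
def LT2 : List (Tr (Fin 9) (Fin 4)) := [A1, A2, B1, B2, bp, ap, bpp, app, c2, d2]
def LI1 : List (Tr (Fin 9) (Fin 4) × Tr (Fin 9) (Fin 4)) := [(a1, b1), (b1, a1), (a1, bq1), (bq1, a1), (b1, aq1), (aq1, b1), (aq1, bq1), (bq1, aq1), (a2, b2), (b2, a2), (a2, bq2), (bq2, a2), (b2, aq2), (aq2, b2), (aq2, bq2), (bq2, aq2)]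
def LE1 : List (Tr (Fin 9) (Fin 4) × Tr (Fin 9) (Fin 4)) := [(a1, aq1), (aq1, a1), (b1, bq1), (bq1, b1), (a2, aq2), (aq2, a2), (b2, bq2), (bq2, b2)]
def LI2 : List (Tr (Fin 9) (Fin 4) × Tr (Fin 9) (Fin 4)) := [(A1, B2), (B2, A1), (A1, bp), (bp, A1), (B2, ap), (ap, B2), (ap, bp), (bp, ap), (A2, B1), (B1, A2), (A2, bpp), (bpp, A2), (B1, app), (app, B1), (app, bpp), (bpp, app)]
def LE2 : List (Tr (Fin 9) (Fin 4) × Tr (Fin 9) (Fin 4)) := [(A1, ap), (ap, A1), (B2, bp), (bp, B2), (A2, app), (app, A2), (B1, bpp), (bpp, B1)]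
def S1 : Sys (Fin 9) (Fin 4) := ⟨0, {t | t ∈ LT1}, fun t u => (t, u) ∈ LI1⟩
def S2 : Sys (Fin 9) (Fin 4) := ⟨0, {t | t ∈ LT2}, fun t u => (t, u) ∈ LI2⟩
instance (t u : Tr (Fin 9) (Fin 4)) : Decidable (S1.I t u) := inferInstanceAs (Decidable ((t, u) ∈ LI1))
instance (t : Tr (Fin 9) (Fin 4)) : Decidable (t ∈ S1.T) := inferInstanceAs (Decidable (t ∈ LT1))
instance (t u : Tr (Fin 9) (Fin 4)) : Decidable (S1.Conc t u) := inferInstanceAs (Decidable (t.src = u.src ∧ (t, u) ∈ LI1))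
instance (t u : Tr (Fin 9) (Fin 4)) : Decidable (S2.I t u) := inferInstanceAs (Decidable ((t, u) ∈ LI2))
instance (t : Tr (Fin 9) (Fin 4)) : Decidable (t ∈ S2.T) := inferInstanceAs (Decidable (t ∈ LT2))
instance (t u : Tr (Fin 9) (Fin 4)) : Decidable (S2.Conc t u) := inferInstanceAs (Decidable (t.src = u.src ∧ (t, u) ∈ LI2))
theorem S1_tsi : S1.IsTSI :=
  isTSI_of_lists S1 LT1 LI1 LE1 (fun _ => Iff.rfl) (fun _ _ => Iff.rfl)
    (by decide) (by decide) (by decide) (by decide) (by decide) (by decide)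
    (by decide) (by decide) (by decide) (by decide)
theorem S1_nac : S1.NoAutoConc := noAutoConc_of_lists S1 LI1 (fun _ _ => Iff.rfl) (by decide)
theorem S2_tsi : S2.IsTSI :=
  isTSI_of_lists S2 LT2 LI2 LE2 (fun _ => Iff.rfl) (fun _ _ => Iff.rfl)
    (by decide) (by decide) (by decide) (by decide) (by decide) (by decide)
    (by decide) (by decide) (by decide) (by decide)
theorem S2_nac : S2.NoAutoConc := noAutoConc_of_lists S2 LI2 (fun _ _ => Iff.rfl) (by decide)

def R12 : List (Tr (Fin 9) (Fin 4)) → List (Tr (Fin 9) (Fin 4)) → Prop := fun x y =>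
  (x = [] ∧ y = []) ∨ (x = [a1] ∧ y = [A1]) ∨ (x = [a2] ∧ y = [A2]) ∨ (x = [b1] ∧ y = [B1]) ∨ (x = [b2] ∧ y = [B2]) ∨ (x = [a1, c1] ∧ y = [A1, c2]) ∨ (x = [b1, d1] ∧ y = [B1, d2]) ∨ (x = [a1, bq1] ∧ y = [A1, bp]) ∨ (x = [a2, bq2] ∧ y = [A2, bpp]) ∨ (x = [b1, aq1] ∧ y = [B1, app]) ∨ (x = [b2, aq2] ∧ y = [B2, ap])
theorem r0 : R12 [] [] := Or.inl ⟨rfl, rfl⟩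
theorem r1 : R12 [a1] [A1] := Or.inr (Or.inl ⟨rfl, rfl⟩)
theorem r2 : R12 [a2] [A2] := Or.inr (Or.inr (Or.inl ⟨rfl, rfl⟩))
theorem r3 : R12 [b1] [B1] := Or.inr (Or.inr (Or.inr (Or.inl ⟨rfl, rfl⟩)))
theorem r4 : R12 [b2] [B2] := Or.inr (Or.inr (Or.inr (Or.inr (Or.inl ⟨rfl, rfl⟩))))
theorem r5 : R12 [a1, c1] [A1, c2] := Or.inr (Or.inr (Or.inr (Or.inr (Or.inr (Or.inl ⟨rfl, rfl⟩)))))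
theorem r6 : R12 [b1, d1] [B1, d2] := Or.inr (Or.inr (Or.inr (Or.inr (Or.inr (Or.inr (Or.inl ⟨rfl, rfl⟩))))))
theorem r7 : R12 [a1, bq1] [A1, bp] := Or.inr (Or.inr (Or.inr (Or.inr (Or.inr (Or.inr (Or.inr (Or.inl ⟨rfl, rfl⟩)))))))
theorem r8 : R12 [a2, bq2] [A2, bpp] := Or.inr (Or.inr (Or.inr (Or.inr (Or.inr (Or.inr (Or.inr (Or.inr (Or.inl ⟨rfl, rfl⟩))))))))
theorem r9 : R12 [b1, aq1] [B1, app] := Or.inr (Or.inr (Or.inr (Or.inr (Or.inr (Or.inr (Or.inr (Or.inr (Or.inr (Or.inl ⟨rfl, rfl⟩)))))))))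
theorem r10 : R12 [b2, aq2] [B2, ap] := Or.inr (Or.inr (Or.inr (Or.inr (Or.inr (Or.inr (Or.inr (Or.inr (Or.inr (Or.inr (⟨rfl, rfl⟩))))))))))

theorem R12_hpb : IsHPB S1 S2 R12 := by
  constructor
  · exact r0
  · rintro π₁ π₂ (⟨rfl, rfl⟩ | ⟨rfl, rfl⟩ | ⟨rfl, rfl⟩ | ⟨rfl, rfl⟩ | ⟨rfl, rfl⟩ | ⟨rfl, rfl⟩ | ⟨rfl, rfl⟩ | ⟨rfl, rfl⟩ | ⟨rfl, rfl⟩ | ⟨rfl, rfl⟩ | ⟨rfl, rfl⟩)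
    · exact ⟨trivial, trivial⟩
    · exact ⟨⟨by decide, rfl, trivial⟩, ⟨by decide, rfl, trivial⟩⟩
    · exact ⟨⟨by decide, rfl, trivial⟩, ⟨by decide, rfl, trivial⟩⟩
    · exact ⟨⟨by decide, rfl, trivial⟩, ⟨by decide, rfl, trivial⟩⟩
    · exact ⟨⟨by decide, rfl, trivial⟩, ⟨by decide, rfl, trivial⟩⟩
    · exact ⟨⟨by decide, rfl, by decide, rfl, trivial⟩, ⟨by decide, rfl, by decide, rfl, trivial⟩⟩
    · exact ⟨⟨by decide, rfl, by decide, rfl, trivial⟩, ⟨by decide, rfl, by decide, rfl, trivial⟩⟩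
    · exact ⟨⟨by decide, rfl, by decide, rfl, trivial⟩, ⟨by decide, rfl, by decide, rfl, trivial⟩⟩
    · exact ⟨⟨by decide, rfl, by decide, rfl, trivial⟩, ⟨by decide, rfl, by decide, rfl, trivial⟩⟩
    · exact ⟨⟨by decide, rfl, by decide, rfl, trivial⟩, ⟨by decide, rfl, by decide, rfl, trivial⟩⟩
    · exact ⟨⟨by decide, rfl, by decide, rfl, trivial⟩, ⟨by decide, rfl, by decide, rfl, trivial⟩⟩
  · rintro π₁ π₂ (⟨rfl, rfl⟩ | ⟨rfl, rfl⟩ | ⟨rfl, rfl⟩ | ⟨rfl, rfl⟩ | ⟨rfl, rfl⟩ | ⟨rfl, rfl⟩ | ⟨rfl, rfl⟩ | ⟨rfl, rfl⟩ | ⟨rfl, rfl⟩ | ⟨rfl, rfl⟩ | ⟨rfl, rfl⟩) u hu hsrc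
    -- pair 0: [] / []
    · have hu' : u ∈ LT1 := hu
      simp only [LT1, List.mem_cons, List.not_mem_nil, or_false] at hu'
      rcases hu' with rfl | rfl | rfl | rfl | rfl | rfl | rfl | rfl | rfl | rfl
      · exact ⟨A1, by decide, by decide, by decide,
          ⟨iff_of_false (lastIndep_nil _ _) (lastIndep_nil _ _),
           posetIso_of_length_eq _ _ _ _ rfl (by decide) (by decide)⟩, r1⟩
      · exact ⟨A2, by decide, by decide, by decide,
          ⟨iff_of_false (lastIndep_nil _ _) (lastIndep_nil _ _),
           posetIso_of_length_eq _ _ _ _ rfl (by decide) (by decide)⟩, r2⟩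
      · exact ⟨B1, by decide, by decide, by decide,
          ⟨iff_of_false (lastIndep_nil _ _) (lastIndep_nil _ _),
           posetIso_of_length_eq _ _ _ _ rfl (by decide) (by decide)⟩, r3⟩
      · exact ⟨B2, by decide, by decide, by decide,
          ⟨iff_of_false (lastIndep_nil _ _) (lastIndep_nil _ _),
           posetIso_of_length_eq _ _ _ _ rfl (by decide) (by decide)⟩, r4⟩
      · exact absurd hsrc (by decide)
      · exact absurd hsrc (by decide)
      · exact absurd hsrc (by decide)
      · exact absurd hsrc (by decide)
      · exact absurd hsrc (by decide)
      · exact absurd hsrc (by decide)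
    -- pair 1: ['a1'] / ['A1']
    · have hu' : u ∈ LT1 := hu
      simp only [LT1, List.mem_cons, List.not_mem_nil, or_false] at hu'
      rcases hu' with rfl | rfl | rfl | rfl | rfl | rfl | rfl | rfl | rfl | rfl
      · exact absurd hsrc (by decide)
      · exact absurd hsrc (by decide)
      · exact absurd hsrc (by decide)
      · exact absurd hsrc (by decide)
      · exact ⟨bp, by decide, by decide, by decide,
          ⟨by rw [lastIndep_single, lastIndep_single]; decide,
           posetIso_of_length_eq _ _ _ _ rfl (by decide) (by decide)⟩, r7⟩
      · exact absurd hsrc (by decide)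
      · exact absurd hsrc (by decide)
      · exact absurd hsrc (by decide)
      · exact ⟨c2, by decide, by decide, by decide,
          ⟨by rw [lastIndep_single, lastIndep_single]; decide,
           posetIso_of_length_eq _ _ _ _ rfl (by decide) (by decide)⟩, r5⟩
      · exact absurd hsrc (by decide)
    -- pair 2: ['a2'] / ['A2']
    · have hu' : u ∈ LT1 := hu
      simp only [LT1, List.mem_cons, List.not_mem_nil, or_false] at hu'
      rcases hu' with rfl | rfl | rfl | rfl | rfl | rfl | rfl | rfl | rfl | rfl
      · exact absurd hsrc (by decide)
      · exact absurd hsrc (by decide)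
      · exact absurd hsrc (by decide)
      · exact absurd hsrc (by decide)
      · exact absurd hsrc (by decide)
      · exact absurd hsrc (by decide)
      · exact ⟨bpp, by decide, by decide, by decide,
          ⟨by rw [lastIndep_single, lastIndep_single]; decide,
           posetIso_of_length_eq _ _ _ _ rfl (by decide) (by decide)⟩, r8⟩
      · exact absurd hsrc (by decide)
      · exact absurd hsrc (by decide)
      · exact absurd hsrc (by decide)
    -- pair 3: ['b1'] / ['B1']
    · have hu' : u ∈ LT1 := hu
      simp only [LT1, List.mem_cons, List.not_mem_nil, or_false] at hu'
      rcases hu' with rfl | rfl | rfl | rfl | rfl | rfl | rfl | rfl | rfl | rfl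
      · exact absurd hsrc (by decide)
      · exact absurd hsrc (by decide)
      · exact absurd hsrc (by decide)
      · exact absurd hsrc (by decide)
      · exact absurd hsrc (by decide)
      · exact ⟨app, by decide, by decide, by decide,
          ⟨by rw [lastIndep_single, lastIndep_single]; decide,
           posetIso_of_length_eq _ _ _ _ rfl (by decide) (by decide)⟩, r9⟩
      · exact absurd hsrc (by decide)
      · exact absurd hsrc (by decide)
      · exact absurd hsrc (by decide)
      · exact ⟨d2, by decide, by decide, by decide,
          ⟨by rw [lastIndep_single, lastIndep_single]; decide,
           posetIso_of_length_eq _ _ _ _ rfl (by decide) (by decide)⟩, r6⟩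
    -- pair 4: ['b2'] / ['B2']
    · have hu' : u ∈ LT1 := hu
      simp only [LT1, List.mem_cons, List.not_mem_nil, or_false] at hu'
      rcases hu' with rfl | rfl | rfl | rfl | rfl | rfl | rfl | rfl | rfl | rfl
      · exact absurd hsrc (by decide)
      · exact absurd hsrc (by decide)
      · exact absurd hsrc (by decide)
      · exact absurd hsrc (by decide)
      · exact absurd hsrc (by decide)
      · exact absurd hsrc (by decide)
      · exact absurd hsrc (by decide)
      · exact ⟨ap, by decide, by decide, by decide,
          ⟨by rw [lastIndep_single, lastIndep_single]; decide,
           posetIso_of_length_eq _ _ _ _ rfl (by decide) (by decide)⟩, r10⟩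
      · exact absurd hsrc (by decide)
      · exact absurd hsrc (by decide)
    -- pair 5: ['a1', 'c1'] / ['A1', 'c2']
    · have hu' : u ∈ LT1 := hu
      simp only [LT1, List.mem_cons, List.not_mem_nil, or_false] at hu'
      rcases hu' with rfl | rfl | rfl | rfl | rfl | rfl | rfl | rfl | rfl | rfl
      · exact absurd hsrc (by decide)
      · exact absurd hsrc (by decide)
      · exact absurd hsrc (by decide)
      · exact absurd hsrc (by decide)
      · exact absurd hsrc (by decide)
      · exact absurd hsrc (by decide)
      · exact absurd hsrc (by decide)
      · exact absurd hsrc (by decide)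
      · exact absurd hsrc (by decide)
      · exact absurd hsrc (by decide)
    -- pair 6: ['b1', 'd1'] / ['B1', 'd2']
    · have hu' : u ∈ LT1 := hu
      simp only [LT1, List.mem_cons, List.not_mem_nil, or_false] at hu'
      rcases hu' with rfl | rfl | rfl | rfl | rfl | rfl | rfl | rfl | rfl | rfl
      · exact absurd hsrc (by decide)
      · exact absurd hsrc (by decide)
      · exact absurd hsrc (by decide)
      · exact absurd hsrc (by decide)
      · exact absurd hsrc (by decide)
      · exact absurd hsrc (by decide)
      · exact absurd hsrc (by decide)
      · exact absurd hsrc (by decide)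
      · exact absurd hsrc (by decide)
      · exact absurd hsrc (by decide)
    -- pair 7: ['a1', 'bq1'] / ['A1', 'bp']
    · have hu' : u ∈ LT1 := hu
      simp only [LT1, List.mem_cons, List.not_mem_nil, or_false] at hu'
      rcases hu' with rfl | rfl | rfl | rfl | rfl | rfl | rfl | rfl | rfl | rfl
      · exact absurd hsrc (by decide)
      · exact absurd hsrc (by decide)
      · exact absurd hsrc (by decide)
      · exact absurd hsrc (by decide)
      · exact absurd hsrc (by decide)
      · exact absurd hsrc (by decide)
      · exact absurd hsrc (by decide)
      · exact absurd hsrc (by decide)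
      · exact absurd hsrc (by decide)
      · exact absurd hsrc (by decide)
    -- pair 8: ['a2', 'bq2'] / ['A2', 'bpp']
    · have hu' : u ∈ LT1 := hu
      simp only [LT1, List.mem_cons, List.not_mem_nil, or_false] at hu'
      rcases hu' with rfl | rfl | rfl | rfl | rfl | rfl | rfl | rfl | rfl | rfl
      · exact absurd hsrc (by decide)
      · exact absurd hsrc (by decide)
      · exact absurd hsrc (by decide)
      · exact absurd hsrc (by decide)
      · exact absurd hsrc (by decide)
      · exact absurd hsrc (by decide)
      · exact absurd hsrc (by decide)
      · exact absurd hsrc (by decide)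
      · exact absurd hsrc (by decide)
      · exact absurd hsrc (by decide)
    -- pair 9: ['b1', 'aq1'] / ['B1', 'app']
    · have hu' : u ∈ LT1 := hu
      simp only [LT1, List.mem_cons, List.not_mem_nil, or_false] at hu'
      rcases hu' with rfl | rfl | rfl | rfl | rfl | rfl | rfl | rfl | rfl | rfl
      · exact absurd hsrc (by decide)
      · exact absurd hsrc (by decide)
      · exact absurd hsrc (by decide)
      · exact absurd hsrc (by decide)
      · exact absurd hsrc (by decide)
      · exact absurd hsrc (by decide)
      · exact absurd hsrc (by decide)
      · exact absurd hsrc (by decide)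
      · exact absurd hsrc (by decide)
      · exact absurd hsrc (by decide)
    -- pair 10: ['b2', 'aq2'] / ['B2', 'ap']
    · have hu' : u ∈ LT1 := hu
      simp only [LT1, List.mem_cons, List.not_mem_nil, or_false] at hu'
      rcases hu' with rfl | rfl | rfl | rfl | rfl | rfl | rfl | rfl | rfl | rfl
      · exact absurd hsrc (by decide)
      · exact absurd hsrc (by decide)
      · exact absurd hsrc (by decide)
      · exact absurd hsrc (by decide)
      · exact absurd hsrc (by decide)
      · exact absurd hsrc (by decide)
      · exact absurd hsrc (by decide)
      · exact absurd hsrc (by decide)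
      · exact absurd hsrc (by decide)
      · exact absurd hsrc (by decide)
  · rintro π₁ π₂ (⟨rfl, rfl⟩ | ⟨rfl, rfl⟩ | ⟨rfl, rfl⟩ | ⟨rfl, rfl⟩ | ⟨rfl, rfl⟩ | ⟨rfl, rfl⟩ | ⟨rfl, rfl⟩ | ⟨rfl, rfl⟩ | ⟨rfl, rfl⟩ | ⟨rfl, rfl⟩ | ⟨rfl, rfl⟩) u hu hsrc
    -- pair 0: [] / []
    · have hu' : u ∈ LT2 := hu
      simp only [LT2, List.mem_cons, List.not_mem_nil, or_false] at hu'
      rcases hu' with rfl | rfl | rfl | rfl | rfl | rfl | rfl | rfl | rfl | rfl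
      · exact ⟨a1, by decide, by decide, by decide,
          ⟨iff_of_false (lastIndep_nil _ _) (lastIndep_nil _ _),
           posetIso_of_length_eq _ _ _ _ rfl (by decide) (by decide)⟩, r1⟩
      · exact ⟨a2, by decide, by decide, by decide,
          ⟨iff_of_false (lastIndep_nil _ _) (lastIndep_nil _ _),
           posetIso_of_length_eq _ _ _ _ rfl (by decide) (by decide)⟩, r2⟩
      · exact ⟨b1, by decide, by decide, by decide,
          ⟨iff_of_false (lastIndep_nil _ _) (lastIndep_nil _ _),
           posetIso_of_length_eq _ _ _ _ rfl (by decide) (by decide)⟩, r3⟩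
      · exact ⟨b2, by decide, by decide, by decide,
          ⟨iff_of_false (lastIndep_nil _ _) (lastIndep_nil _ _),
           posetIso_of_length_eq _ _ _ _ rfl (by decide) (by decide)⟩, r4⟩
      · exact absurd hsrc (by decide)
      · exact absurd hsrc (by decide)
      · exact absurd hsrc (by decide)
      · exact absurd hsrc (by decide)
      · exact absurd hsrc (by decide)
      · exact absurd hsrc (by decide)
    -- pair 1: ['a1'] / ['A1']
    · have hu' : u ∈ LT2 := hu
      simp only [LT2, List.mem_cons, List.not_mem_nil, or_false] at hu'
      rcases hu' with rfl | rfl | rfl | rfl | rfl | rfl | rfl | rfl | rfl | rfl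
      · exact absurd hsrc (by decide)
      · exact absurd hsrc (by decide)
      · exact absurd hsrc (by decide)
      · exact absurd hsrc (by decide)
      · exact ⟨bq1, by decide, by decide, by decide,
          ⟨by rw [lastIndep_single, lastIndep_single]; decide,
           posetIso_of_length_eq _ _ _ _ rfl (by decide) (by decide)⟩, r7⟩
      · exact absurd hsrc (by decide)
      · exact absurd hsrc (by decide)
      · exact absurd hsrc (by decide)
      · exact ⟨c1, by decide, by decide, by decide,
          ⟨by rw [lastIndep_single, lastIndep_single]; decide,
           posetIso_of_length_eq _ _ _ _ rfl (by decide) (by decide)⟩, r5⟩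
      · exact absurd hsrc (by decide)
    -- pair 2: ['a2'] / ['A2']
    · have hu' : u ∈ LT2 := hu
      simp only [LT2, List.mem_cons, List.not_mem_nil, or_false] at hu'
      rcases hu' with rfl | rfl | rfl | rfl | rfl | rfl | rfl | rfl | rfl | rfl
      · exact absurd hsrc (by decide)
      · exact absurd hsrc (by decide)
      · exact absurd hsrc (by decide)
      · exact absurd hsrc (by decide)
      · exact absurd hsrc (by decide)
      · exact absurd hsrc (by decide)
      · exact ⟨bq2, by decide, by decide, by decide,
          ⟨by rw [lastIndep_single, lastIndep_single]; decide,
           posetIso_of_length_eq _ _ _ _ rfl (by decide) (by decide)⟩, r8⟩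
      · exact absurd hsrc (by decide)
      · exact absurd hsrc (by decide)
      · exact absurd hsrc (by decide)
    -- pair 3: ['b1'] / ['B1']
    · have hu' : u ∈ LT2 := hu
      simp only [LT2, List.mem_cons, List.not_mem_nil, or_false] at hu'
      rcases hu' with rfl | rfl | rfl | rfl | rfl | rfl | rfl | rfl | rfl | rfl
      · exact absurd hsrc (by decide)
      · exact absurd hsrc (by decide)
      · exact absurd hsrc (by decide)
      · exact absurd hsrc (by decide)
      · exact absurd hsrc (by decide)
      · exact absurd hsrc (by decide)
      · exact absurd hsrc (by decide)
      · exact ⟨aq1, by decide, by decide, by decide,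
          ⟨by rw [lastIndep_single, lastIndep_single]; decide,
           posetIso_of_length_eq _ _ _ _ rfl (by decide) (by decide)⟩, r9⟩
      · exact absurd hsrc (by decide)
      · exact ⟨d1, by decide, by decide, by decide,
          ⟨by rw [lastIndep_single, lastIndep_single]; decide,
           posetIso_of_length_eq _ _ _ _ rfl (by decide) (by decide)⟩, r6⟩
    -- pair 4: ['b2'] / ['B2']
    · have hu' : u ∈ LT2 := hu
      simp only [LT2, List.mem_cons, List.not_mem_nil, or_false] at hu'
      rcases hu' with rfl | rfl | rfl | rfl | rfl | rfl | rfl | rfl | rfl | rfl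
      · exact absurd hsrc (by decide)
      · exact absurd hsrc (by decide)
      · exact absurd hsrc (by decide)
      · exact absurd hsrc (by decide)
      · exact absurd hsrc (by decide)
      · exact ⟨aq2, by decide, by decide, by decide,
          ⟨by rw [lastIndep_single, lastIndep_single]; decide,
           posetIso_of_length_eq _ _ _ _ rfl (by decide) (by decide)⟩, r10⟩
      · exact absurd hsrc (by decide)
      · exact absurd hsrc (by decide)
      · exact absurd hsrc (by decide)
      · exact absurd hsrc (by decide)
    -- pair 5: ['a1', 'c1'] / ['A1', 'c2']
    · have hu' : u ∈ LT2 := hu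
      simp only [LT2, List.mem_cons, List.not_mem_nil, or_false] at hu'
      rcases hu' with rfl | rfl | rfl | rfl | rfl | rfl | rfl | rfl | rfl | rfl
      · exact absurd hsrc (by decide)
      · exact absurd hsrc (by decide)
      · exact absurd hsrc (by decide)
      · exact absurd hsrc (by decide)
      · exact absurd hsrc (by decide)
      · exact absurd hsrc (by decide)
      · exact absurd hsrc (by decide)
      · exact absurd hsrc (by decide)
      · exact absurd hsrc (by decide)
      · exact absurd hsrc (by decide)
    -- pair 6: ['b1', 'd1'] / ['B1', 'd2']
    · have hu' : u ∈ LT2 := hu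
      simp only [LT2, List.mem_cons, List.not_mem_nil, or_false] at hu'
      rcases hu' with rfl | rfl | rfl | rfl | rfl | rfl | rfl | rfl | rfl | rfl
      · exact absurd hsrc (by decide)
      · exact absurd hsrc (by decide)
      · exact absurd hsrc (by decide)
      · exact absurd hsrc (by decide)
      · exact absurd hsrc (by decide)
      · exact absurd hsrc (by decide)
      · exact absurd hsrc (by decide)
      · exact absurd hsrc (by decide)
      · exact absurd hsrc (by decide)
      · exact absurd hsrc (by decide)
    -- pair 7: ['a1', 'bq1'] / ['A1', 'bp']
    · have hu' : u ∈ LT2 := hu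
      simp only [LT2, List.mem_cons, List.not_mem_nil, or_false] at hu'
      rcases hu' with rfl | rfl | rfl | rfl | rfl | rfl | rfl | rfl | rfl | rfl
      · exact absurd hsrc (by decide)
      · exact absurd hsrc (by decide)
      · exact absurd hsrc (by decide)
      · exact absurd hsrc (by decide)
      · exact absurd hsrc (by decide)
      · exact absurd hsrc (by decide)
      · exact absurd hsrc (by decide)
      · exact absurd hsrc (by decide)
      · exact absurd hsrc (by decide)
      · exact absurd hsrc (by decide)
    -- pair 8: ['a2', 'bq2'] / ['A2', 'bpp']
    · have hu' : u ∈ LT2 := hu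
      simp only [LT2, List.mem_cons, List.not_mem_nil, or_false] at hu'
      rcases hu' with rfl | rfl | rfl | rfl | rfl | rfl | rfl | rfl | rfl | rfl
      · exact absurd hsrc (by decide)
      · exact absurd hsrc (by decide)
      · exact absurd hsrc (by decide)
      · exact absurd hsrc (by decide)
      · exact absurd hsrc (by decide)
      · exact absurd hsrc (by decide)
      · exact absurd hsrc (by decide)
      · exact absurd hsrc (by decide)
      · exact absurd hsrc (by decide)
      · exact absurd hsrc (by decide)
    -- pair 9: ['b1', 'aq1'] / ['B1', 'app']
    · have hu' : u ∈ LT2 := hu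
      simp only [LT2, List.mem_cons, List.not_mem_nil, or_false] at hu'
      rcases hu' with rfl | rfl | rfl | rfl | rfl | rfl | rfl | rfl | rfl | rfl
      · exact absurd hsrc (by decide)
      · exact absurd hsrc (by decide)
      · exact absurd hsrc (by decide)
      · exact absurd hsrc (by decide)
      · exact absurd hsrc (by decide)
      · exact absurd hsrc (by decide)
      · exact absurd hsrc (by decide)
      · exact absurd hsrc (by decide)
      · exact absurd hsrc (by decide)
      · exact absurd hsrc (by decide)
    -- pair 10: ['b2', 'aq2'] / ['B2', 'ap']
    · have hu' : u ∈ LT2 := hu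
      simp only [LT2, List.mem_cons, List.not_mem_nil, or_false] at hu'
      rcases hu' with rfl | rfl | rfl | rfl | rfl | rfl | rfl | rfl | rfl | rfl
      · exact absurd hsrc (by decide)
      · exact absurd hsrc (by decide)
      · exact absurd hsrc (by decide)
      · exact absurd hsrc (by decide)
      · exact absurd hsrc (by decide)
      · exact absurd hsrc (by decide)
      · exact absurd hsrc (by decide)
      · exact absurd hsrc (by decide)
      · exact absurd hsrc (by decide)
      · exact absurd hsrc (by decide)


-- maxSet computations for S1, S2
theorem n10 : S1.maxSet 0 = sl [a1, a2, b1, b2] :=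
  maxSet_eq_list S1 LT1 (fun _ => Iff.rfl) 0 _ (by decide) (by decide)
theorem n11 : S1.maxSet 1 = sl [bq1, c1] :=
  maxSet_eq_list S1 LT1 (fun _ => Iff.rfl) 1 _ (by decide) (by decide)
theorem n13 : S1.maxSet 3 = sl [aq1, d1] :=
  maxSet_eq_list S1 LT1 (fun _ => Iff.rfl) 3 _ (by decide) (by decide)
theorem k20 : S2.maxSet 0 = sl [A1, A2, B1, B2] :=
  maxSet_eq_list S2 LT2 (fun _ => Iff.rfl) 0 _ (by decide) (by decide)
theorem k22 : S2.maxSet 2 = sl [bpp] :=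
  maxSet_eq_list S2 LT2 (fun _ => Iff.rfl) 2 _ (by decide) (by decide)
theorem k24 : S2.maxSet 4 = sl [ap] :=
  maxSet_eq_list S2 LT2 (fun _ => Iff.rfl) 4 _ (by decide) (by decide)

-- the complete trace {a1, b1} of the maximal set at the initial state of S1
theorem ctab : S1.CompleteTrace (sl [a1, b1]) (sl [a1, a2, b1, b2]) :=
  completeTrace_list S1 _ _
    (Or.inr ⟨⟨a1, by simp⟩, conflictFree_list S1 _ 0 (by decide) (by decide) (by decide)⟩)
    (conflictFree_list S1 _ 0 (by decide) (by decide) (by decide)) (by decide) (by decide)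

theorem xab : sl [a1, b1] ∈ S1.calX := Or.inr ⟨0, n10 ▸ ctab⟩

def phi : TLmu (Fin 4) :=
  TLmu.diaOx (TLmu.and (TLmu.dia 0 (TLmu.dia 2 TLmu.tt)) (TLmu.dia 1 (TLmu.dia 3 TLmu.tt)))

theorem S1_sat : S1.initProc ∈ TLmu.denot S1 (fun _ => ∅) phi := by
  have e1 : S1.initProc = (sl [a1, a2, b1, b2], none) :=
    congrArg (fun X => (X, (none : Option (Tr (Fin 9) (Fin 4))))) n10
  rw [e1]
  refine ⟨⟨Or.inl ⟨0, n10.symm⟩, trivial⟩, sl [a1, b1], xab, ctab, ?_, ?_⟩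
  · -- ⟨a⟩⟨c⟩tt
    refine ⟨⟨xab, trivial⟩, a1, (by decide : a1 ∈ [a1, b1]), rfl, Or.inl rfl, ?_⟩
    rw [show S1.maxSet a1.tgt = sl [bq1, c1] from n11]
    refine ⟨⟨Or.inl ⟨1, n11.symm⟩, show a1 ∈ LT1 by decide⟩, c1,
      (by decide : c1 ∈ [bq1, c1]), rfl, Or.inl ⟨rfl, by decide⟩, ?_⟩
    exact ⟨Or.inl ⟨7, rfl⟩, show c1 ∈ LT1 by decide⟩
  · -- ⟨b⟩⟨d⟩tt
    refine ⟨⟨xab, trivial⟩, b1, (by decide : b1 ∈ [a1, b1]), rfl, Or.inl rfl, ?_⟩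
    rw [show S1.maxSet b1.tgt = sl [aq1, d1] from n13]
    refine ⟨⟨Or.inl ⟨3, n13.symm⟩, show b1 ∈ LT1 by decide⟩, d1,
      (by decide : d1 ∈ [aq1, d1]), rfl, Or.inl ⟨rfl, by decide⟩, ?_⟩
    exact ⟨Or.inl ⟨8, rfl⟩, show d1 ∈ LT1 by decide⟩

theorem S2_not : S2.initProc ∉ TLmu.denot S2 (fun _ => ∅) phi := by
  rintro ⟨-, M, -, hct, ⟨-, ra, hraM, hlba, -, hca⟩, ⟨-, rb, hrbM, hlbb, -, hcb⟩⟩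
  rw [show S2.initProc.1 = sl [A1, A2, B1, B2] from k20] at hct
  obtain ⟨-, hcf, hsub, -⟩ := hct
  -- ra has label 0 and leads to a state enabling label 2 : ra = A1
  have hra : ra = A1 := by
    have h1 : ra ∈ [A1, A2, B1, B2] := hsub hraM
    simp only [List.mem_cons, List.mem_singleton, List.not_mem_nil, or_false] at h1
    rcases h1 with rfl | rfl | rfl | rfl
    · rfl
    · exfalso
      obtain ⟨-, r', hr', hlb', -, -⟩ := hca
      have h2 : r' ∈ [bpp] := by
        have := hr'
        rw [show S2.maxSet A2.tgt = sl [bpp] from k22] at this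
        exact this
      simp only [List.mem_singleton] at h2
      subst h2
      exact absurd hlb' (by decide)
    · exact absurd hlba (by decide)
    · exact absurd hlba (by decide)
  -- rb has label 1 and leads to a state enabling label 3 : rb = B1
  have hrb : rb = B1 := by
    have h1 : rb ∈ [A1, A2, B1, B2] := hsub hrbM
    simp only [List.mem_cons, List.mem_singleton, List.not_mem_nil, or_false] at h1
    rcases h1 with rfl | rfl | rfl | rfl
    · exact absurd hlbb (by decide)
    · exact absurd hlbb (by decide)
    · rfl
    · exfalso
      obtain ⟨-, r', hr', hlb', -, -⟩ := hcb
      have h2 : r' ∈ [ap] := by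
        have := hr'
        rw [show S2.maxSet B2.tgt = sl [ap] from k24] at this
        exact this
      simp only [List.mem_singleton] at h2
      subst h2
      exact absurd hlb' (by decide)
  subst hra; subst hrb
  exact absurd (hcf.2.2 A1 hraM B1 hrbM (by decide)).2 (by decide)

theorem S12_not_tlmu : ¬ TLmuEquiv S1 S2 := fun h =>
  S2_not ((h phi ⟨trivial, trivial⟩ (by simp [phi, TLmu.FV])).mp S1_sat)

end P1
end TC

open TC in
/-- History-preserving bisimilarity and `TLμ`-equivalence are
incomparable: there exist finite systems `𝔗₁ ∼_hpb 𝔗₂` that are distinguished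
by the `TLμ` formula `⟨⊗⟩(⟨a⟩⟨c⟩tt ∧ ⟨b⟩⟨d⟩tt)`, and there exist finite
systems `𝔗₃ ∼_{TLμ} 𝔗₄` with `𝔗₃ ≁_hpb 𝔗₄`. Hence neither
`∼_hpb ⊆ ∼_{TLμ}` nor `∼_{TLμ} ⊆ ∼_hpb`. -/
theorem hpb_tlmu_incomparable :
    (∃ (S₁ S₂ L : Type) (𝔗₁ : Sys S₁ L) (𝔗₂ : Sys S₂ L),
      𝔗₁.IsTSI ∧ 𝔗₂.IsTSI ∧ Finite S₁ ∧ Finite S₂ ∧ 𝔗₁.T.Finite ∧ 𝔗₂.T.Finite ∧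
      𝔗₁.NoAutoConc ∧ 𝔗₂.NoAutoConc ∧
      HPBisimilar 𝔗₁ 𝔗₂ ∧ ¬ TLmuEquiv 𝔗₁ 𝔗₂ ∧
      ∃ a b c d : L,
        ¬ ((𝔗₁.initProc ∈ TLmu.denot 𝔗₁ (fun _ => ∅)
              (TLmu.diaOx (TLmu.and (TLmu.dia a (TLmu.dia c TLmu.tt))
                (TLmu.dia b (TLmu.dia d TLmu.tt))))) ↔
           (𝔗₂.initProc ∈ TLmu.denot 𝔗₂ (fun _ => ∅)
              (TLmu.diaOx (TLmu.and (TLmu.dia a (TLmu.dia c TLmu.tt))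
                (TLmu.dia b (TLmu.dia d TLmu.tt))))))) ∧
    (∃ (S₃ S₄ L : Type) (𝔗₃ : Sys S₃ L) (𝔗₄ : Sys S₄ L),
      𝔗₃.IsTSI ∧ 𝔗₄.IsTSI ∧ Finite S₃ ∧ Finite S₄ ∧ 𝔗₃.T.Finite ∧ 𝔗₄.T.Finite ∧
      𝔗₃.NoAutoConc ∧ 𝔗₄.NoAutoConc ∧
      TLmuEquiv 𝔗₃ 𝔗₄ ∧ ¬ HPBisimilar 𝔗₃ 𝔗₄) := by
  constructor
  · refine ⟨Fin 9, Fin 9, Fin 4, P1.S1, P1.S2, P1.S1_tsi, P1.S2_tsi,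
      inferInstance, inferInstance, P1.LT1.finite_toSet, P1.LT2.finite_toSet,
      P1.S1_nac, P1.S2_nac, ⟨P1.R12, P1.R12_hpb⟩, P1.S12_not_tlmu,
      0, 1, 2, 3, fun h => P1.S2_not (h.mp P1.S1_sat)⟩
  · exact ⟨Fin 5, Fin 4, Fin 2, P2.T3, P2.T4, P2.T3_tsi, P2.T4_tsi,
      inferInstance, inferInstance, P2.LT3.finite_toSet, P2.LT4.finite_toSet,
      P2.T3_nac, P2.T4_nac, P2.T34_tlmu, P2.T34_not_hpb⟩
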